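/- arXiv:1806.11531 — 3 statements merged into one kernel-verified Lean document; each statement's English description precedes it below -/
import Mathlib

section
/- Let W be a stochastic matrix from a finite set X to pmfs on a finite set Y, and for α ∈ (0,1] let q_{α,W} be the order-α Rényi center of W. Then for all 0 < α ≤ η ≤ 1, C_η(W) − C_α(W) ≥ D_α(q_{α,W} ‖ q_{η,W}). -/
open Real MeasureTheory Filter

def IsPMF {Y : Type*} [Fintype Y] (W : Y → ℝ) : Prop :=
  (∀ y, 0 ≤ W y) ∧ ∑ y, W y = 1

noncomputable def renyiDiv {Y : Type*} [Fintype Y] (α : ℝ) (W Q : Y → ℝ) : ℝ :=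
  if α = 1 then ∑ y, W y * Real.log (W y / Q y)
  else (α - 1)⁻¹ * Real.log (∑ y, W y ^ α * Q y ^ (1 - α))

open Classical in
/-- Extended-real-valued order-`α` Rényi divergence, taking the value `⊤` when the
divergence is infinite. -/
noncomputable def renyiDivE {Y : Type*} [Fintype Y] (α : ℝ) (W Q : Y → ℝ) : ENNReal :=
  if α = 1 then
    (if ∀ y, Q y = 0 → W y = 0 then ENNReal.ofReal (renyiDiv 1 W Q) else ⊤)
  else
    (if 0 < ∑ y, W y ^ α * Q y ^ (1 - α) then ENNReal.ofReal (renyiDiv α W Q) else ⊤)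

/-- The order-`α` tilted pmf `W^α_Q`. -/
noncomputable def tilt {Y : Type*} [Fintype Y] (α : ℝ) (W Q : Y → ℝ) : Y → ℝ :=
  fun y => Real.exp ((1 - α) * renyiDiv α W Q) * W y ^ α * Q y ^ (1 - α)

/-- The order-`α` Rényi information `I_α(P;W)` (mutual information for `α = 1`). -/
noncomputable def renyiInfo {X Y : Type*} [Fintype X] [Fintype Y] (α : ℝ) (P : X → ℝ)
    (W : X → Y → ℝ) : ℝ :=
  if α = 1 then ∑ x, P x * ∑ y, W x y * Real.log (W x y / (∑ x', P x' * W x' y))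
  else (α / (α - 1)) * Real.log (∑ y, (∑ x, P x * W x y ^ α) ^ α⁻¹)

/-- The order-`α` Rényi capacity `C_α(W) = sup_P I_α(P;W)`. -/
noncomputable def renyiCap {X Y : Type*} [Fintype X] [Fintype Y] (α : ℝ) (W : X → Y → ℝ) : ℝ :=
  sSup {c | ∃ P : X → ℝ, IsPMF P ∧ c = renyiInfo α P W}

/-- The sphere packing exponent `E_sp(R,W)`. -/
noncomputable def spe {X Y : Type*} [Fintype X] [Fintype Y] (R : ℝ) (W : X → Y → ℝ) : ℝ :=
  sSup {e | ∃ α ∈ Set.Ioo (0:ℝ) 1, e = ((1 - α) / α) * (renyiCap α W - R)}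

/-- The order-`α` Rényi mean `q_{α,P}`. -/
noncomputable def renyiMean {X Y : Type*} [Fintype X] [Fintype Y] (α : ℝ) (P : X → ℝ)
    (W : X → Y → ℝ) : Y → ℝ :=
  fun y => (∑ x, P x * W x y ^ α) ^ α⁻¹ / ∑ y', (∑ x, P x * W x y' ^ α) ^ α⁻¹

/-! ### Auxiliary lemmas -/

open Topology

section Basic
variable {Y : Type*} [Fintype Y] {α η : ℝ} {p q m : Y → ℝ}

lemma IsPMF.exists_pos (hp : IsPMF p) : ∃ y, 0 < p y := by
  by_contra h
  push_neg at h
  have h0 : ∑ y, p y = 0 :=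
    Finset.sum_eq_zero fun y _ => le_antisymm (h y) (hp.1 y)
  rw [hp.2] at h0; exact one_ne_zero h0

/-- two-point weighted AM-GM -/
lemma gm2 {a b w : ℝ} (ha : 0 ≤ a) (hb : 0 ≤ b) (hw : 0 < w) (hw1 : w < 1) :
    a ^ w * b ^ (1 - w) ≤ w * a + (1 - w) * b := by
  have := Real.geom_mean_le_arith_mean_weighted Finset.univ ![w, 1-w] ![a, b]
    (by intro i _; fin_cases i <;> simp <;> linarith)
    (by simp)
    (by intro i _; fin_cases i <;> simpa)
  simpa [Fin.prod_univ_two, Fin.sum_univ_two] using this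

lemma gm2_strict {a b w : ℝ} (ha : 0 ≤ a) (hb : 0 ≤ b) (hw : 0 < w) (hw1 : w < 1)
    (hab : a ≠ b) : a ^ w * b ^ (1 - w) < w * a + (1 - w) * b := by
  rcases eq_or_lt_of_le ha with h0 | ha'
  · have hb' : 0 < b := lt_of_le_of_ne hb (by rintro rfl; exact hab h0.symm)
    rw [← h0, Real.zero_rpow hw.ne', zero_mul]
    have : 0 < (1 - w) * b := mul_pos (by linarith) hb'
    nlinarith
  rcases eq_or_lt_of_le hb with h0 | hb'
  · rw [← h0, Real.zero_rpow (by linarith : (1:ℝ) - w ≠ 0), mul_zero]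
    have : 0 < w * a := mul_pos hw ha'
    nlinarith
  · have hlog := strictConcaveOn_log_Ioi.2 (Set.mem_Ioi.2 ha') (Set.mem_Ioi.2 hb') hab hw
      (by linarith : (0:ℝ) < 1 - w) (by ring)
    simp only [smul_eq_mul] at hlog
    have h1 : a ^ w * b ^ (1 - w) = Real.exp (w * Real.log a + (1 - w) * Real.log b) := by
      rw [Real.rpow_def_of_pos ha', Real.rpow_def_of_pos hb', ← Real.exp_add]
      ring_nf
    rw [h1]
    calc Real.exp (w * Real.log a + (1 - w) * Real.log b)
        < Real.exp (Real.log (w * a + (1 - w) * b)) := Real.exp_lt_exp.2 hlog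
      _ = w * a + (1 - w) * b := Real.exp_log (by nlinarith)

lemma term_nonneg {y : Y} (hp : 0 ≤ p y) (hq : 0 ≤ q y) :
    (0:ℝ) ≤ p y ^ α * q y ^ (1 - α) :=
  mul_nonneg (Real.rpow_nonneg hp _) (Real.rpow_nonneg hq _)

lemma sum_gm_le_one (hα : 0 < α) (hα1 : α < 1) (hp : IsPMF p) (hq : IsPMF q) :
    ∑ y, p y ^ α * q y ^ (1 - α) ≤ 1 := by
  calc ∑ y, p y ^ α * q y ^ (1 - α) ≤ ∑ y, (α * p y + (1 - α) * q y) :=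
        Finset.sum_le_sum fun y _ => gm2 (hp.1 y) (hq.1 y) hα hα1
    _ = 1 := by
        rw [Finset.sum_add_distrib, ← Finset.mul_sum, ← Finset.mul_sum, hp.2, hq.2]; ring

lemma eq_of_sum_gm_eq_one (hα : 0 < α) (hα1 : α < 1) (hp : IsPMF p) (hq : IsPMF q)
    (h : 1 ≤ ∑ y, p y ^ α * q y ^ (1 - α)) : p = q := by
  by_contra hne
  have hy : ∃ y, p y ≠ q y := by
    by_contra h'; push_neg at h'; exact hne (funext h')
  obtain ⟨y0, hy0⟩ := hy
  have hsum : ∑ y, p y ^ α * q y ^ (1 - α) < ∑ y, (α * p y + (1 - α) * q y) := by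
    apply Finset.sum_lt_sum (fun y _ => gm2 (hp.1 y) (hq.1 y) hα hα1)
    exact ⟨y0, Finset.mem_univ _, gm2_strict (hp.1 y0) (hq.1 y0) hα hα1 hy0⟩
  have : ∑ y, (α * p y + (1 - α) * q y) = 1 := by
    rw [Finset.sum_add_distrib, ← Finset.mul_sum, ← Finset.mul_sum, hp.2, hq.2]; ring
  linarith

lemma sum_gm_pos_iff (hα : 0 < α) (hα1 : α < 1) (hp : ∀ y, 0 ≤ p y) (hq : ∀ y, 0 ≤ q y) :
    (0 < ∑ y, p y ^ α * q y ^ (1 - α)) ↔ ∃ y, 0 < p y ∧ 0 < q y := by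
  constructor
  · intro h
    by_contra hc; push_neg at hc
    have hz : ∑ y, p y ^ α * q y ^ (1 - α) = 0 := by
      apply Finset.sum_eq_zero; intro y _
      rcases eq_or_lt_of_le (hp y) with h0 | h0
      · rw [← h0, Real.zero_rpow hα.ne', zero_mul]
      · have hq0 : q y = 0 := le_antisymm (hc y h0) (hq y)
        rw [hq0, Real.zero_rpow (by linarith : (1:ℝ) - α ≠ 0), mul_zero]
    linarith
  · rintro ⟨y, hpy, hqy⟩
    apply Finset.sum_pos' (fun y _ => term_nonneg (hp y) (hq y))
    exact ⟨y, Finset.mem_univ _,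
      mul_pos (Real.rpow_pos_of_pos hpy _) (Real.rpow_pos_of_pos hqy _)⟩

lemma aux_pt {py qy : ℝ} (h0 : 0 < py) (hq : 0 ≤ qy) (t : ℝ) :
    py * (qy / py) ^ t = py ^ (1 - t) * qy ^ t := by
  rw [Real.div_rpow hq h0.le, Real.rpow_sub h0, Real.rpow_one]
  ring

/-- Monotonicity in order, both < 1. -/
lemma renyi_mono_lt (h0 : 0 < α) (hαη : α < η) (hη : η < 1) (hp : IsPMF p)
    (hq : ∀ y, 0 ≤ q y) :
    (α - 1)⁻¹ * Real.log (∑ y, p y ^ α * q y ^ (1 - α)) ≤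
      (η - 1)⁻¹ * Real.log (∑ y, p y ^ η * q y ^ (1 - η)) := by
  classical
  have hα1 : α < 1 := lt_trans hαη hη
  have hη0 : 0 < η := lt_trans h0 hαη
  have hs'0 : 0 < 1 - η := by linarith
  have hs0 : 0 < 1 - α := by linarith
  set z : Y → ℝ := fun y => if p y = 0 then 0 else (q y / p y) ^ (1 - η) with hz
  have hznn : ∀ y, 0 ≤ z y := by
    intro y; rw [hz]; dsimp only
    split
    · exact le_refl 0
    · exact Real.rpow_nonneg (div_nonneg (hq y) (hp.1 y)) _
  have key := Real.arith_mean_le_rpow_mean Finset.univ p z (fun y _ => hp.1 y) hp.2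
    (fun y _ => hznn y) (p := (1 - α) / (1 - η)) ((le_div_iff₀ hs'0).2 (by linarith))
  have e1 : ∑ y, p y * z y = ∑ y, p y ^ η * q y ^ (1 - η) := by
    refine Finset.sum_congr rfl fun y _ => ?_
    by_cases hpy : p y = 0
    · rw [hz]; dsimp only
      rw [if_pos hpy, hpy, mul_zero, Real.zero_rpow hη0.ne', zero_mul]
    · have hpy' : 0 < p y := lt_of_le_of_ne (hp.1 y) (Ne.symm hpy)
      rw [hz]; dsimp only
      rw [if_neg hpy, aux_pt hpy' (hq y) (1 - η), show (1:ℝ) - (1 - η) = η by ring]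
  have e2 : ∑ y, p y * z y ^ ((1 - α) / (1 - η)) = ∑ y, p y ^ α * q y ^ (1 - α) := by
    refine Finset.sum_congr rfl fun y _ => ?_
    by_cases hpy : p y = 0
    · rw [hz]; dsimp only
      rw [if_pos hpy, hpy, Real.zero_rpow (by positivity : (1 - α) / (1 - η) ≠ 0),
        mul_zero, Real.zero_rpow h0.ne', zero_mul]
    · have hpy' : 0 < p y := lt_of_le_of_ne (hp.1 y) (Ne.symm hpy)
      rw [hz]; dsimp only
      rw [if_neg hpy, ← Real.rpow_mul (div_nonneg (hq y) (hp.1 y)),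
        show (1 - η) * ((1 - α) / (1 - η)) = 1 - α by field_simp,
        aux_pt hpy' (hq y) (1 - α), show (1:ℝ) - (1 - α) = α by ring]
  rw [e1, e2, one_div_div] at key
  have hSαnn : 0 ≤ ∑ y, p y ^ α * q y ^ (1 - α) :=
    Finset.sum_nonneg fun y _ => term_nonneg (hp.1 y) (hq y)
  rcases eq_or_lt_of_le hSαnn with hSα0 | hSαpos
  · have hSη0 : ∑ y, p y ^ η * q y ^ (1 - η) = 0 := by
      have h1 : ¬ (0 < ∑ y, p y ^ α * q y ^ (1 - α)) := by rw [← hSα0]; exact lt_irrefl 0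
      have h2 := (sum_gm_pos_iff h0 hα1 hp.1 hq).not.1 h1
      have h3 := (sum_gm_pos_iff hη0 hη hp.1 hq).not.2 h2
      have h4 : 0 ≤ ∑ y, p y ^ η * q y ^ (1 - η) :=
        Finset.sum_nonneg fun y _ => term_nonneg (hp.1 y) (hq y)
      rcases eq_or_lt_of_le h4 with h5 | h5
      · exact h5.symm
      · exact absurd h5 h3
    rw [← hSα0, hSη0, Real.log_zero, mul_zero, mul_zero]
  · have hSηpos : 0 < ∑ y, p y ^ η * q y ^ (1 - η) := by
      rw [sum_gm_pos_iff hη0 hη hp.1 hq]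
      exact (sum_gm_pos_iff h0 hα1 hp.1 hq).1 hSαpos
    have hlog : Real.log (∑ y, p y ^ η * q y ^ (1 - η)) ≤
        ((1 - η) / (1 - α)) * Real.log (∑ y, p y ^ α * q y ^ (1 - α)) := by
      rw [← Real.log_rpow hSαpos]
      exact Real.log_le_log hSηpos key
    have h1 : (1 - η)⁻¹ * Real.log (∑ y, p y ^ η * q y ^ (1 - η)) ≤
        (1 - α)⁻¹ * Real.log (∑ y, p y ^ α * q y ^ (1 - α)) := by
      have := mul_le_mul_of_nonneg_left hlog (le_of_lt (inv_pos.2 hs'0))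
      calc (1 - η)⁻¹ * Real.log (∑ y, p y ^ η * q y ^ (1 - η)) ≤
          (1 - η)⁻¹ * (((1 - η) / (1 - α)) * Real.log (∑ y, p y ^ α * q y ^ (1 - α))) := this
        _ = (1 - α)⁻¹ * Real.log (∑ y, p y ^ α * q y ^ (1 - α)) := by
            field_simp
    have eα : (α - 1)⁻¹ = -(1 - α)⁻¹ := by
      rw [show α - 1 = -(1 - α) by ring, inv_neg]
    have eη : (η - 1)⁻¹ = -(1 - η)⁻¹ := by
      rw [show η - 1 = -(1 - η) by ring, inv_neg]
    rw [eα, eη]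
    linarith

/-- Monotonicity: D_α ≤ D_1 (KL). -/
lemma renyi_mono_one (h0 : 0 < α) (hα1 : α < 1) (hp : IsPMF p) (hq : IsPMF q)
    (habs : ∀ y, q y = 0 → p y = 0) :
    (α - 1)⁻¹ * Real.log (∑ y, p y ^ α * q y ^ (1 - α)) ≤
      ∑ y, p y * Real.log (p y / q y) := by
  classical
  set t := Finset.univ.filter (fun y => p y ≠ 0) with ht
  have hmem : ∀ y ∈ t, 0 < p y := by
    intro y hy
    rw [ht, Finset.mem_filter] at hy
    exact lt_of_le_of_ne (hp.1 y) (Ne.symm hy.2)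
  have hqmem : ∀ y ∈ t, 0 < q y := by
    intro y hy
    rcases eq_or_lt_of_le (hq.1 y) with h' | h'
    · exact absurd (habs y h'.symm) (by rw [ht, Finset.mem_filter] at hy; exact hy.2)
    · exact h'
  have hw' : ∑ y ∈ t, p y = 1 := by
    rw [ht, Finset.sum_filter_of_ne (fun y _ h => h), hp.2]
  set z : Y → ℝ := fun y => (q y / p y) ^ (1 - α) with hz
  have hGM := Real.geom_mean_le_arith_mean_weighted t p z (fun y hy => (hmem y hy).le) hw'
    (fun y hy => Real.rpow_nonneg (div_nonneg (hq.1 y) (hp.1 y)) _)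
  have hzpos : ∀ y ∈ t, 0 < z y := fun y hy =>
    Real.rpow_pos_of_pos (div_pos (hqmem y hy) (hmem y hy)) _
  have hPpos : 0 < ∏ y ∈ t, z y ^ p y :=
    Finset.prod_pos fun y hy => Real.rpow_pos_of_pos (hzpos y hy) _
  have hRHS : ∑ y ∈ t, p y * z y = ∑ y ∈ t, p y ^ α * q y ^ (1 - α) := by
    refine Finset.sum_congr rfl fun y hy => ?_
    rw [hz]; dsimp only
    rw [aux_pt (hmem y hy) (hq.1 y) (1 - α), show (1:ℝ) - (1 - α) = α by ring]
  have hsub : ∑ y ∈ t, p y ^ α * q y ^ (1 - α) ≤ ∑ y, p y ^ α * q y ^ (1 - α) := by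
    apply Finset.sum_le_sum_of_subset_of_nonneg (Finset.filter_subset _ _)
    intro y _ _; exact term_nonneg (hp.1 y) (hq.1 y)
  have hchain : ∏ y ∈ t, z y ^ p y ≤ ∑ y, p y ^ α * q y ^ (1 - α) := by
    calc ∏ y ∈ t, z y ^ p y ≤ ∑ y ∈ t, p y * z y := hGM
      _ = ∑ y ∈ t, p y ^ α * q y ^ (1 - α) := hRHS
      _ ≤ _ := hsub
  have hlogP : Real.log (∏ y ∈ t, z y ^ p y) =
      (α - 1) * ∑ y ∈ t, p y * Real.log (p y / q y) := by
    rw [Real.log_prod (fun y hy => (Real.rpow_pos_of_pos (hzpos y hy) _).ne')]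
    rw [Finset.mul_sum]
    refine Finset.sum_congr rfl fun y hy => ?_
    rw [Real.log_rpow (hzpos y hy), hz]; dsimp only
    rw [Real.log_rpow (div_pos (hqmem y hy) (hmem y hy)),
      Real.log_div (hqmem y hy).ne' (hmem y hy).ne',
      Real.log_div (hmem y hy).ne' (hqmem y hy).ne']
    ring
  have hlogS : (α - 1) * ∑ y ∈ t, p y * Real.log (p y / q y) ≤
      Real.log (∑ y, p y ^ α * q y ^ (1 - α)) := by
    rw [← hlogP]
    exact Real.log_le_log hPpos hchain
  have hKeq : ∑ y ∈ t, p y * Real.log (p y / q y) = ∑ y, p y * Real.log (p y / q y) := by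
    rw [ht]
    exact Finset.sum_filter_of_ne fun y _ h => fun hp0 => h (by rw [hp0, zero_mul])
  have hneg : (α - 1)⁻¹ < 0 := inv_lt_zero.2 (by linarith)
  have := mul_le_mul_of_nonpos_left hlogS hneg.le
  rw [← mul_assoc, inv_mul_cancel₀ (by linarith : α - 1 ≠ 0), one_mul, hKeq] at this
  linarith

lemma kl_term_nonneg (hm : IsPMF m) (hq : IsPMF q) (habs : ∀ y, q y = 0 → m y = 0) (y : Y) :
    0 ≤ m y * Real.log (m y / q y) - m y + q y := by
  rcases eq_or_lt_of_le (hm.1 y) with h0 | h0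
  · rw [← h0]; simp [hq.1 y]
  · have hqy : 0 < q y := by
      rcases eq_or_lt_of_le (hq.1 y) with h' | h'
      · exact absurd (habs y h'.symm) (by linarith)
      · exact h'
    have hlog : Real.log (q y / m y) ≤ q y / m y - 1 :=
      Real.log_le_sub_one_of_pos (div_pos hqy h0)
    have hrw : Real.log (m y / q y) = -Real.log (q y / m y) := by
      rw [show m y / q y = (q y / m y)⁻¹ by rw [inv_div], Real.log_inv]
    rw [hrw]
    have h2 : m y * Real.log (q y / m y) ≤ m y * (q y / m y - 1) :=
      mul_le_mul_of_nonneg_left hlog h0.le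
    have h3 : m y * (q y / m y - 1) = q y - m y := by field_simp
    nlinarith

lemma kl_nonneg (hm : IsPMF m) (hq : IsPMF q) (habs : ∀ y, q y = 0 → m y = 0) :
    0 ≤ ∑ y, m y * Real.log (m y / q y) := by
  have h := Finset.sum_nonneg (fun y (_ : y ∈ Finset.univ) => kl_term_nonneg hm hq habs y)
  have e : ∑ y, (m y * Real.log (m y / q y) - m y + q y)
      = ∑ y, m y * Real.log (m y / q y) - (∑ y, m y) + ∑ y, q y := by
    rw [Finset.sum_add_distrib, Finset.sum_sub_distrib]
  rw [e, hm.2, hq.2] at h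
  linarith

lemma kl_eq_of_nonpos (hm : IsPMF m) (hq : IsPMF q) (habs : ∀ y, q y = 0 → m y = 0)
    (h : ∑ y, m y * Real.log (m y / q y) ≤ 0) : m = q := by
  have hsum : ∑ y, (m y * Real.log (m y / q y) - m y + q y) = 0 := by
    have e : ∑ y, (m y * Real.log (m y / q y) - m y + q y)
        = ∑ y, m y * Real.log (m y / q y) - (∑ y, m y) + ∑ y, q y := by
      rw [Finset.sum_add_distrib, Finset.sum_sub_distrib]
    rw [e, hm.2, hq.2]
    have := kl_nonneg hm hq habs
    linarith
  have hterm := (Finset.sum_eq_zero_iff_of_nonneg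
    (fun y (_ : y ∈ Finset.univ) => kl_term_nonneg hm hq habs y)).1 hsum
  funext y
  have hy := hterm y (Finset.mem_univ y)
  rcases eq_or_lt_of_le (hm.1 y) with h0 | h0
  · rw [← h0] at hy ⊢
    simpa using hy.symm
  · have hqy : 0 < q y := by
      rcases eq_or_lt_of_le (hq.1 y) with h' | h'
      · exact absurd (habs y h'.symm) (by linarith)
      · exact h'
    by_contra hne
    have hne' : q y / m y ≠ 1 := by
      intro h'
      exact hne ((div_eq_one_iff_eq h0.ne').1 h').symm
    have hlog : Real.log (q y / m y) < q y / m y - 1 :=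
      Real.log_lt_sub_one_of_pos (div_pos hqy h0) hne'
    have hrw : Real.log (m y / q y) = -Real.log (q y / m y) := by
      rw [show m y / q y = (q y / m y)⁻¹ by rw [inv_div], Real.log_inv]
    rw [hrw] at hy
    have h2 : m y * Real.log (q y / m y) < m y * (q y / m y - 1) :=
      mul_lt_mul_of_pos_left hlog h0
    have h3 : m y * (q y / m y - 1) = q y - m y := by field_simp
    nlinarith

end Basic

section Channel
variable {X Y : Type*} [Fintype X] [Fintype Y] {α : ℝ} {P : X → ℝ} {W : X → Y → ℝ}
  {m q : Y → ℝ}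

lemma A_nonneg (hP : IsPMF P) (hW : ∀ x, IsPMF (W x)) (y : Y) :
    0 ≤ ∑ x, P x * W x y ^ α :=
  Finset.sum_nonneg fun x _ => mul_nonneg (hP.1 x) (Real.rpow_nonneg ((hW x).1 y) _)

lemma N_pos (hα0 : 0 < α) (hP : IsPMF P) (hW : ∀ x, IsPMF (W x)) :
    0 < ∑ y, (∑ x, P x * W x y ^ α) ^ α⁻¹ := by
  obtain ⟨x0, hx0⟩ := hP.exists_pos
  obtain ⟨y0, hy0⟩ := (hW x0).exists_pos
  have hA : 0 < ∑ x, P x * W x y0 ^ α := by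
    apply Finset.sum_pos' (fun x _ => mul_nonneg (hP.1 x) (Real.rpow_nonneg ((hW x).1 y0) _))
    exact ⟨x0, Finset.mem_univ _, mul_pos hx0 (Real.rpow_pos_of_pos hy0 _)⟩
  apply Finset.sum_pos' (fun y _ => Real.rpow_nonneg (A_nonneg hP hW y) _)
  exact ⟨y0, Finset.mem_univ _, Real.rpow_pos_of_pos hA _⟩

lemma renyiMean_pmf (hα0 : 0 < α) (hP : IsPMF P) (hW : ∀ x, IsPMF (W x)) :
    IsPMF (renyiMean α P W) := by
  constructor
  · intro y
    exact div_nonneg (Real.rpow_nonneg (A_nonneg hP hW y) _) (N_pos hα0 hP hW).le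
  · simp only [renyiMean]
    rw [← Finset.sum_div, div_self (N_pos hα0 hP hW).ne']

/-- Sibson's identity. -/
lemma sibson (hα0 : 0 < α) (hα1 : α < 1) (hP : IsPMF P) (hW : ∀ x, IsPMF (W x)) (q : Y → ℝ)
    (hV : 0 < ∑ y, (∑ x, P x * W x y ^ α) * q y ^ (1 - α)) :
    (0 < ∑ y, (renyiMean α P W y) ^ α * q y ^ (1 - α)) ∧
    renyiInfo α P W + (α - 1)⁻¹ * Real.log (∑ y, (renyiMean α P W y) ^ α * q y ^ (1 - α))
      = (α - 1)⁻¹ * Real.log (∑ y, (∑ x, P x * W x y ^ α) * q y ^ (1 - α)) := by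
  have hN := N_pos hα0 hP hW
  set N := ∑ y, (∑ x, P x * W x y ^ α) ^ α⁻¹ with hNdef
  have hMA : ∀ y, (renyiMean α P W y) ^ α = (∑ x, P x * W x y ^ α) / N ^ α := by
    intro y
    rw [renyiMean, ← hNdef,
      Real.div_rpow (Real.rpow_nonneg (A_nonneg hP hW y) _) hN.le,
      Real.rpow_inv_rpow (A_nonneg hP hW y) hα0.ne']
  have hsum : ∑ y, (renyiMean α P W y) ^ α * q y ^ (1 - α)
      = (∑ y, (∑ x, P x * W x y ^ α) * q y ^ (1 - α)) / N ^ α := by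
    rw [Finset.sum_div]
    exact Finset.sum_congr rfl fun y _ => by rw [hMA y, div_mul_eq_mul_div]
  have hNα : (0:ℝ) < N ^ α := Real.rpow_pos_of_pos hN _
  constructor
  · rw [hsum]; exact div_pos hV hNα
  · rw [hsum, renyiInfo, if_neg (ne_of_lt hα1), ← hNdef,
      Real.log_div hV.ne' hNα.ne', Real.log_rpow hN]
    field_simp
    ring

lemma avg_le {C : ℝ} {S : X → ℝ} (hα1 : α < 1) (hP : IsPMF P)
    (hS : ∀ x, 0 < S x) (hD : ∀ x, (α - 1)⁻¹ * Real.log (S x) ≤ C) :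
    (α - 1)⁻¹ * Real.log (∑ x, P x * S x) ≤ C := by
  have hne : α - 1 ≠ 0 := by intro h; linarith [sub_eq_zero.1 h]
  have hE : ∀ x, Real.exp ((α - 1) * C) ≤ S x := by
    intro x
    have h1 := mul_le_mul_of_nonpos_left (hD x) (by linarith : α - 1 ≤ 0)
    rw [← mul_assoc, mul_inv_cancel₀ hne, one_mul] at h1
    calc Real.exp ((α - 1) * C) ≤ Real.exp (Real.log (S x)) := Real.exp_le_exp.2 h1
      _ = S x := Real.exp_log (hS x)
  have h2 : Real.exp ((α - 1) * C) ≤ ∑ x, P x * S x := by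
    have e : ∑ x, P x * Real.exp ((α - 1) * C) = Real.exp ((α - 1) * C) := by
      rw [← Finset.sum_mul, hP.2, one_mul]
    rw [← e]
    exact Finset.sum_le_sum fun x _ => mul_le_mul_of_nonneg_left (hE x) (hP.1 x)
  have h3 : (α - 1) * C ≤ Real.log (∑ x, P x * S x) := by
    rw [← Real.log_exp ((α - 1) * C)]
    exact Real.log_le_log (Real.exp_pos _) h2
  have h4 := mul_le_mul_of_nonpos_left h3 (by simp only [inv_nonpos]; linarith : (α - 1)⁻¹ ≤ 0)
  rw [← mul_assoc, inv_mul_cancel₀ hne, one_mul] at h4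
  linarith

lemma renyiDiv_formula_nonneg {p q : Y → ℝ} (hα0 : 0 < α) (hα1 : α < 1)
    (hp : IsPMF p) (hq : IsPMF q) :
    0 ≤ (α - 1)⁻¹ * Real.log (∑ y, p y ^ α * q y ^ (1 - α)) := by
  have h1 := sum_gm_le_one hα0 hα1 hp hq
  have h2 : Real.log (∑ y, p y ^ α * q y ^ (1 - α)) ≤ 0 :=
    Real.log_nonpos (Finset.sum_nonneg fun y _ => term_nonneg (hp.1 y) (hq.1 y)) h1
  have hinv : (α - 1)⁻¹ ≤ 0 := by simp only [inv_nonpos]; linarith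
  nlinarith [mul_nonneg (neg_nonneg.2 hinv) (neg_nonneg.2 h2)]

lemma V_eq (q : Y → ℝ) :
    ∑ y, (∑ x, P x * W x y ^ α) * q y ^ (1 - α)
      = ∑ x, P x * ∑ y, W x y ^ α * q y ^ (1 - α) := by
  calc ∑ y, (∑ x, P x * W x y ^ α) * q y ^ (1 - α)
      = ∑ y, ∑ x, P x * (W x y ^ α * q y ^ (1 - α)) := by
        refine Finset.sum_congr rfl fun y _ => ?_
        rw [Finset.sum_mul]
        exact Finset.sum_congr rfl fun x _ => by ring
    _ = ∑ x, ∑ y, P x * (W x y ^ α * q y ^ (1 - α)) := Finset.sum_comm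
    _ = ∑ x, P x * ∑ y, W x y ^ α * q y ^ (1 - α) :=
        Finset.sum_congr rfl fun x _ => (Finset.mul_sum _ _ _).symm

lemma info_le {C : ℝ} {q : Y → ℝ} (hα0 : 0 < α) (hα1 : α < 1) (hW : ∀ x, IsPMF (W x))
    (hq : IsPMF q)
    (h : ∀ x, 0 < ∑ y, W x y ^ α * q y ^ (1 - α) ∧
      (α - 1)⁻¹ * Real.log (∑ y, W x y ^ α * q y ^ (1 - α)) ≤ C)
    (hP : IsPMF P) : renyiInfo α P W ≤ C := by
  have hV : 0 < ∑ y, (∑ x, P x * W x y ^ α) * q y ^ (1 - α) := by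
    rw [V_eq]
    obtain ⟨x0, hx0⟩ := hP.exists_pos
    apply Finset.sum_pos' (fun x _ => mul_nonneg (hP.1 x) (h x).1.le)
    exact ⟨x0, Finset.mem_univ _, mul_pos hx0 (h x0).1⟩
  obtain ⟨hpos, hid⟩ := sibson hα0 hα1 hP hW q hV
  have hub : (α - 1)⁻¹ * Real.log (∑ y, (∑ x, P x * W x y ^ α) * q y ^ (1 - α)) ≤ C := by
    rw [V_eq]
    exact avg_le hα1 hP (fun x => (h x).1) (fun x => (h x).2)
  have hnn := renyiDiv_formula_nonneg hα0 hα1 (renyiMean_pmf hα0 hP hW) hq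
  linarith

lemma output_pmf (hP : IsPMF P) (hW : ∀ x, IsPMF (W x)) :
    IsPMF (fun y => ∑ x, P x * W x y) := by
  constructor
  · exact fun y => Finset.sum_nonneg fun x _ => mul_nonneg (hP.1 x) ((hW x).1 y)
  · calc ∑ y, ∑ x, P x * W x y = ∑ x, ∑ y, P x * W x y := Finset.sum_comm
      _ = ∑ x, P x * ∑ y, W x y :=
          Finset.sum_congr rfl fun x _ => (Finset.mul_sum _ _ _).symm
      _ = 1 := by
          rw [← hP.2]
          exact Finset.sum_congr rfl fun x _ => by rw [(hW x).2, mul_one]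

/-- Sibson's identity for `α = 1`. -/
lemma sibsonKL (hP : IsPMF P) (hW : ∀ x, IsPMF (W x)) (q : Y → ℝ)
    (habs : ∀ y, q y = 0 → ∀ x, W x y = 0) :
    ∑ x, P x * ∑ y, W x y * Real.log (W x y / q y)
      = renyiInfo 1 P W
        + ∑ y, (∑ x, P x * W x y) * Real.log ((∑ x, P x * W x y) / q y) := by
  rw [renyiInfo, if_pos rfl]
  have swap : ∀ (f : X → Y → ℝ), ∑ x, P x * ∑ y, f x y = ∑ y, ∑ x, P x * f x y := by
    intro f
    rw [Finset.sum_comm]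
    exact Finset.sum_congr rfl fun x _ => Finset.mul_sum _ _ _
  rw [swap, swap, ← Finset.sum_add_distrib]
  refine Finset.sum_congr rfl fun y _ => ?_
  by_cases hqy : q y = 0
  · have hWy : ∀ x, W x y = 0 := habs y hqy
    simp [hWy]
  · by_cases hmy : (∑ x, P x * W x y) = 0
    · have hz : ∀ x, P x * W x y = 0 := by
        intro x
        exact (Finset.sum_eq_zero_iff_of_nonneg
          (fun x _ => mul_nonneg (hP.1 x) ((hW x).1 y))).1 hmy x (Finset.mem_univ _)
      have e : ∀ x, P x * (W x y * Real.log (W x y / q y)) = 0 := fun x => by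
        rw [← mul_assoc, hz x, zero_mul]
      have e' : ∀ x, P x * (W x y * Real.log (W x y / (∑ x, P x * W x y))) = 0 := fun x => by
        rw [← mul_assoc, hz x, zero_mul]
      rw [Finset.sum_eq_zero fun x _ => e x, Finset.sum_eq_zero fun x _ => e' x, hmy]
      simp
    · have hmy' : 0 < ∑ x, P x * W x y :=
        lt_of_le_of_ne (Finset.sum_nonneg fun x _ => mul_nonneg (hP.1 x) ((hW x).1 y))
          (Ne.symm hmy)
      have term : ∀ x, P x * (W x y * Real.log (W x y / q y))
          = P x * (W x y * Real.log (W x y / (∑ x, P x * W x y)))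
            + (P x * W x y) * Real.log ((∑ x, P x * W x y) / q y) := by
        intro x
        by_cases hWxy : W x y = 0
        · simp [hWxy]
        · rw [Real.log_div hWxy hqy, Real.log_div hWxy hmy,
            Real.log_div hmy hqy]
          ring
      rw [Finset.sum_congr rfl fun x _ => term x, Finset.sum_add_distrib, ← Finset.sum_mul]

lemma info_le_KL {C : ℝ} (hW : ∀ x, IsPMF (W x)) (hq : IsPMF q)
    (h : ∀ x, (∀ y, q y = 0 → W x y = 0) ∧ ∑ y, W x y * Real.log (W x y / q y) ≤ C)
    (hP : IsPMF P) : renyiInfo 1 P W ≤ C := by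
  have habs : ∀ y, q y = 0 → ∀ x, W x y = 0 := fun y hy x => (h x).1 y hy
  have hid := sibsonKL hP hW q habs
  have hklnn : 0 ≤ ∑ y, (∑ x, P x * W x y) * Real.log ((∑ x, P x * W x y) / q y) :=
    kl_nonneg (output_pmf hP hW) hq (fun y hy =>
      Finset.sum_eq_zero fun x _ => by rw [habs y hy x, mul_zero])
  have havg : ∑ x, P x * ∑ y, W x y * Real.log (W x y / q y) ≤ C := by
    calc ∑ x, P x * ∑ y, W x y * Real.log (W x y / q y) ≤ ∑ x, P x * C :=
          Finset.sum_le_sum fun x _ => mul_le_mul_of_nonneg_left (h x).2 (hP.1 x)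
      _ = C := by rw [← Finset.sum_mul, hP.2, one_mul]
  linarith

lemma info_pm (hW : ∀ x, IsPMF (W x)) (hα0 : 0 < α) {P : X → ℝ} (x0 : X)
    (hx0 : P x0 = 1) (hP0 : ∀ x, x ≠ x0 → P x = 0) :
    renyiInfo α P W = 0 := by
  by_cases hα1 : α = 1
  · subst hα1
    rw [renyiInfo, if_pos rfl]
    have hin : ∀ y, ∑ x', P x' * W x' y = W x0 y := by
      intro y
      rw [Finset.sum_eq_single x0 (fun x _ hx => by rw [hP0 x hx, zero_mul])
        (fun h => absurd (Finset.mem_univ x0) h), hx0, one_mul]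
    simp only [hin]
    apply Finset.sum_eq_zero
    intro x _
    by_cases hx : x = x0
    · subst hx
      have : ∑ y, W x y * Real.log (W x y / W x y) = 0 := by
        apply Finset.sum_eq_zero
        intro y _
        by_cases hWy : W x y = 0
        · rw [hWy, zero_mul]
        · rw [div_self hWy, Real.log_one, mul_zero]
      rw [this, mul_zero]
    · rw [hP0 x hx, zero_mul]
  · rw [renyiInfo, if_neg hα1]
    have hin : ∀ y, ∑ x', P x' * W x' y ^ α = W x0 y ^ α := by
      intro y
      rw [Finset.sum_eq_single x0 (fun x _ hx => by rw [hP0 x hx, zero_mul])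
        (fun h => absurd (Finset.mem_univ x0) h), hx0, one_mul]
    simp only [hin]
    have : ∀ y, (W x0 y ^ α) ^ α⁻¹ = W x0 y := fun y =>
      Real.rpow_rpow_inv ((hW x0).1 y) hα0.ne'
    simp only [this, (hW x0).2, Real.log_one, mul_zero]

end Channel

section Compact
variable {X Y : Type*} [Fintype X] [Fintype Y] {α : ℝ} {W : X → Y → ℝ}

lemma isCompact_pmf : IsCompact {f : Y → ℝ | IsPMF f} := by
  have hcube : IsCompact (Set.pi Set.univ fun _ : Y => Set.Icc (0:ℝ) 1) :=
    isCompact_univ_pi fun _ => isCompact_Icc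
  apply hcube.of_isClosed_subset
  · have h1 : IsClosed {f : Y → ℝ | ∀ y, 0 ≤ f y} := by
      have : {f : Y → ℝ | ∀ y, 0 ≤ f y} = ⋂ y, {f : Y → ℝ | 0 ≤ f y} := by
        ext f; simp
      rw [this]
      exact isClosed_iInter fun y => isClosed_le continuous_const (continuous_apply y)
    have h2 : IsClosed {f : Y → ℝ | ∑ y, f y = 1} :=
      isClosed_eq (by continuity) continuous_const
    exact (h1.inter h2 : IsClosed ({f : Y → ℝ | ∀ y, 0 ≤ f y} ∩ {f | ∑ y, f y = 1}))
  · intro f hf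
    rw [Set.mem_pi]
    intro y _
    refine ⟨hf.1 y, ?_⟩
    calc f y ≤ ∑ y', f y' :=
          Finset.single_le_sum (fun y' _ => hf.1 y') (Finset.mem_univ y)
      _ = 1 := hf.2

lemma pmf_tendsto_subseq (m : ℕ → Y → ℝ) (hm : ∀ n, IsPMF (m n)) :
    ∃ (L : Y → ℝ) (φ : ℕ → ℕ), IsPMF L ∧ StrictMono φ ∧
      ∀ y, Tendsto (fun k => m (φ k) y) atTop (𝓝 (L y)) := by
  obtain ⟨L, hL, φ, hφ, hconv⟩ := isCompact_pmf.tendsto_subseq hm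
  exact ⟨L, φ, hL, hφ, fun y => (tendsto_pi_nhds.1 hconv) y⟩

lemma tendsto_sum_rpow (hα0 : 0 < α) {m : ℕ → Y → ℝ} {L c : Y → ℝ}
    (hconv : ∀ y, Tendsto (fun k => m k y) atTop (𝓝 (L y))) :
    Tendsto (fun k => ∑ y, (m k y) ^ α * c y) atTop (𝓝 (∑ y, L y ^ α * c y)) := by
  apply tendsto_finset_sum
  intro y _
  exact (((Real.continuousAt_rpow_const (L y) α (Or.inr hα0.le)).tendsto).comp
    (hconv y)).mul_const (c y)

lemma tendsto_KL {q : Y → ℝ} {m : ℕ → Y → ℝ} {L : Y → ℝ}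
    (hconv : ∀ y, Tendsto (fun k => m k y) atTop (𝓝 (L y)))
    (hz : ∀ y, q y = 0 → ∀ k, m k y = 0) :
    Tendsto (fun k => ∑ y, m k y * Real.log (m k y / q y)) atTop
      (𝓝 (∑ y, L y * Real.log (L y / q y))) := by
  apply tendsto_finset_sum
  intro y _
  by_cases hqy : q y = 0
  · have hzero : (fun k => m k y) = fun _ => (0:ℝ) := funext fun k => hz y hqy k
    have hL0 : L y = 0 := by
      have h1 := hconv y
      rw [hzero] at h1
      exact tendsto_nhds_unique h1 tendsto_const_nhds
    have : (fun k => m k y * Real.log (m k y / q y)) = fun _ => (0:ℝ) :=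
      funext fun k => by rw [hz y hqy k, zero_mul]
    rw [this, hL0, zero_mul]
    exact tendsto_const_nhds
  · have hfun : ∀ t : ℝ, t * Real.log (t / q y) = t * Real.log t - t * Real.log (q y) := by
      intro t
      by_cases ht : t = 0
      · simp [ht]
      · rw [Real.log_div ht hqy]; ring
    have hcont : Continuous (fun t : ℝ => t * Real.log t - t * Real.log (q y)) :=
      Real.continuous_mul_log.sub (continuous_id.mul continuous_const)
    have h2 := (hcont.tendsto (L y)).comp (hconv y)
    have e1 : (fun k => m k y * Real.log (m k y / q y))
        = fun k => m k y * Real.log (m k y) - m k y * Real.log (q y) :=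
      funext fun k => hfun _
    rw [e1, hfun (L y)]
    exact h2

lemma exp_le_of_div_log_le {T c : ℝ} (hα1 : α < 1) (hT : 0 < T)
    (h : (α - 1)⁻¹ * Real.log T ≤ c) : Real.exp ((α - 1) * c) ≤ T := by
  have hne : α - 1 ≠ 0 := by intro h'; linarith [sub_eq_zero.1 h']
  have h1 := mul_le_mul_of_nonpos_left h (by linarith : α - 1 ≤ 0)
  rw [← mul_assoc, mul_inv_cancel₀ hne, one_mul] at h1
  calc Real.exp ((α - 1) * c) ≤ Real.exp (Real.log T) := Real.exp_le_exp.2 h1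
    _ = T := Real.exp_log hT

lemma div_log_le_of_exp_le {T c : ℝ} (hα1 : α < 1) (hT : Real.exp ((α - 1) * c) ≤ T) :
    (α - 1)⁻¹ * Real.log T ≤ c := by
  have hne : α - 1 ≠ 0 := by intro h'; linarith [sub_eq_zero.1 h']
  have h1 : (α - 1) * c ≤ Real.log T := by
    rw [← Real.log_exp ((α - 1) * c)]
    exact Real.log_le_log (Real.exp_pos _) hT
  have h2 := mul_le_mul_of_nonpos_left h1 (by simp only [inv_nonpos]; linarith : (α-1)⁻¹ ≤ 0)
  rw [← mul_assoc, inv_mul_cancel₀ hne, one_mul] at h2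
  linarith

end Compact

section Extraction
variable {X Y : Type*} [Fintype X] [Fintype Y] {α : ℝ} {W : X → Y → ℝ}

lemma extract_lt {q : Y → ℝ} {C : ℝ} (hα1 : α ≠ 1)
    (hsup : (⨆ x, renyiDivE α (W x) q) = ENNReal.ofReal C) (x : X) :
    0 < ∑ y, W x y ^ α * q y ^ (1 - α) ∧
      (α - 1)⁻¹ * Real.log (∑ y, W x y ^ α * q y ^ (1 - α)) ≤ max C 0 := by
  have hle : renyiDivE α (W x) q ≤ ENNReal.ofReal C := by
    rw [← hsup]
    exact le_iSup (fun x => renyiDivE α (W x) q) x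
  unfold renyiDivE at hle
  rw [if_neg hα1] at hle
  by_cases hpos : 0 < ∑ y, W x y ^ α * q y ^ (1 - α)
  · rw [if_pos hpos] at hle
    refine ⟨hpos, ?_⟩
    have h2 : ENNReal.ofReal (renyiDiv α (W x) q) ≤ ENNReal.ofReal (max C 0) :=
      le_trans hle (ENNReal.ofReal_le_ofReal (le_max_left C 0))
    have h3 := (ENNReal.ofReal_le_ofReal_iff (le_max_right C 0)).1 h2
    unfold renyiDiv at h3
    rwa [if_neg hα1] at h3
  · rw [if_neg hpos] at hle
    exact absurd (top_le_iff.1 hle) ENNReal.ofReal_ne_top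

lemma extract_one {q : Y → ℝ} {C : ℝ}
    (hsup : (⨆ x, renyiDivE 1 (W x) q) = ENNReal.ofReal C) (x : X) :
    (∀ y, q y = 0 → W x y = 0) ∧
      ∑ y, W x y * Real.log (W x y / q y) ≤ max C 0 := by
  have hle : renyiDivE 1 (W x) q ≤ ENNReal.ofReal C := by
    rw [← hsup]
    exact le_iSup (fun x => renyiDivE 1 (W x) q) x
  unfold renyiDivE at hle
  rw [if_pos rfl] at hle
  by_cases habs : ∀ y, q y = 0 → W x y = 0
  · rw [if_pos habs] at hle
    refine ⟨habs, ?_⟩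
    have h2 : ENNReal.ofReal (renyiDiv 1 (W x) q) ≤ ENNReal.ofReal (max C 0) :=
      le_trans hle (ENNReal.ofReal_le_ofReal (le_max_left C 0))
    have h3 := (ENNReal.ofReal_le_ofReal_iff (le_max_right C 0)).1 h2
    unfold renyiDiv at h3
    rwa [if_pos rfl] at h3
  · rw [if_neg habs] at hle
    exact absurd (top_le_iff.1 hle) ENNReal.ofReal_ne_top

lemma zero_mem_capset [Nonempty X] (hW : ∀ x, IsPMF (W x)) (hα0 : 0 < α) :
    (0:ℝ) ∈ {c | ∃ P : X → ℝ, IsPMF P ∧ c = renyiInfo α P W} := by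
  classical
  set x0 := Classical.arbitrary X
  refine ⟨fun x => if x = x0 then 1 else 0,
    ⟨fun x => by dsimp only; split <;> norm_num, by simp⟩, ?_⟩
  exact (info_pm hW hα0 x0 (by simp) (fun x hx' => by simp [hx'])).symm

lemma cap_approx [Nonempty X] (hW : ∀ x, IsPMF (W x)) (hα0 : 0 < α) (n : ℕ) :
    ∃ P : X → ℝ, IsPMF P ∧ renyiCap α W - 1/(n+1) < renyiInfo α P W := by
  have hlt : renyiCap α W - 1/(n+1) <
      sSup {c | ∃ P : X → ℝ, IsPMF P ∧ c = renyiInfo α P W} := by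
    have hpos : (0:ℝ) < 1/(n+1) := by positivity
    have : renyiCap α W = sSup {c | ∃ P : X → ℝ, IsPMF P ∧ c = renyiInfo α P W} := rfl
    linarith
  obtain ⟨c, hc, hclt⟩ := exists_lt_of_lt_csSup ⟨0, zero_mem_capset hW hα0⟩ hlt
  obtain ⟨P, hP, rfl⟩ := hc
  exact ⟨P, hP, hclt⟩

lemma cap_facts_lt [Nonempty X] (hα0 : 0 < α) (hα1 : α < 1) (hW : ∀ x, IsPMF (W x))
    {q : Y → ℝ} (hq : IsPMF q)
    (hsup : (⨆ x, renyiDivE α (W x) q) = ENNReal.ofReal (renyiCap α W)) :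
    0 ≤ renyiCap α W ∧ ∀ x, 0 < ∑ y, W x y ^ α * q y ^ (1 - α) ∧
      (α - 1)⁻¹ * Real.log (∑ y, W x y ^ α * q y ^ (1 - α)) ≤ renyiCap α W := by
  have hx := fun x => extract_lt (ne_of_lt hα1) hsup x
  have hBdd : BddAbove {c | ∃ P : X → ℝ, IsPMF P ∧ c = renyiInfo α P W} := by
    refine ⟨max (renyiCap α W) 0, ?_⟩
    rintro c ⟨P, hP, rfl⟩
    exact info_le hα0 hα1 hW hq (fun x => ⟨(hx x).1, (hx x).2⟩) hP
  have hC0 : 0 ≤ renyiCap α W := le_csSup hBdd (zero_mem_capset hW hα0)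
  refine ⟨hC0, fun x => ⟨(hx x).1, ?_⟩⟩
  have h2 := (hx x).2
  rwa [max_eq_left hC0] at h2

lemma cap_facts_one [Nonempty X] (hW : ∀ x, IsPMF (W x)) {q : Y → ℝ} (hq : IsPMF q)
    (hsup : (⨆ x, renyiDivE 1 (W x) q) = ENNReal.ofReal (renyiCap 1 W)) :
    0 ≤ renyiCap 1 W ∧ ∀ x, (∀ y, q y = 0 → W x y = 0) ∧
      ∑ y, W x y * Real.log (W x y / q y) ≤ renyiCap 1 W := by
  have hx := fun x => extract_one hsup x
  have hBdd : BddAbove {c | ∃ P : X → ℝ, IsPMF P ∧ c = renyiInfo 1 P W} := by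
    refine ⟨max (renyiCap 1 W) 0, ?_⟩
    rintro c ⟨P, hP, rfl⟩
    exact info_le_KL hW hq (fun x => ⟨(hx x).1, (hx x).2⟩) hP
  have hC0 : 0 ≤ renyiCap 1 W := le_csSup hBdd (zero_mem_capset hW one_pos)
  refine ⟨hC0, fun x => ⟨(hx x).1, ?_⟩⟩
  have h2 := (hx x).2
  rwa [max_eq_left hC0] at h2

end Extraction

section Main
variable {X Y : Type*} [Fintype X] [Fintype Y] {α : ℝ} {W : X → Y → ℝ}

lemma main_lt [Nonempty X] (hα0 : 0 < α) (hα1 : α < 1) (hW : ∀ x, IsPMF (W x))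
    {qα qη : Y → ℝ} (hqα : IsPMF qα) (hqη : IsPMF qη) {Cη : ℝ}
    (hfα : ∀ x, 0 < ∑ y, W x y ^ α * qα y ^ (1 - α) ∧
      (α - 1)⁻¹ * Real.log (∑ y, W x y ^ α * qα y ^ (1 - α)) ≤ renyiCap α W)
    (hfη : ∀ x, 0 < ∑ y, W x y ^ α * qη y ^ (1 - α) ∧
      (α - 1)⁻¹ * Real.log (∑ y, W x y ^ α * qη y ^ (1 - α)) ≤ Cη) :
    0 < ∑ y, qα y ^ α * qη y ^ (1 - α) ∧
      (α - 1)⁻¹ * Real.log (∑ y, qα y ^ α * qη y ^ (1 - α)) ≤ Cη - renyiCap α W := by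
  classical
  choose P hP hPI using fun n : ℕ => cap_approx (α := α) hW hα0 n
  set m : ℕ → Y → ℝ := fun n => renyiMean α (P n) W with hm
  have hmpmf : ∀ n, IsPMF (m n) := fun n => renyiMean_pmf hα0 (hP n) hW
  have hVq : ∀ (n : ℕ) (q : Y → ℝ), (∀ x, 0 < ∑ y, W x y ^ α * q y ^ (1 - α)) →
      0 < ∑ y, (∑ x, P n x * W x y ^ α) * q y ^ (1 - α) := by
    intro n q hpos
    rw [V_eq]
    obtain ⟨x0, hx0⟩ := (hP n).exists_pos
    apply Finset.sum_pos' (fun x _ => mul_nonneg ((hP n).1 x) (hpos x).le)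
    exact ⟨x0, Finset.mem_univ _, mul_pos hx0 (hpos x0)⟩
  have hTbound : ∀ n : ℕ, Real.exp ((α - 1) * (1/(n+1)))
      ≤ ∑ y, (m n y) ^ α * qα y ^ (1 - α) := by
    intro n
    obtain ⟨hpos, hid⟩ := sibson hα0 hα1 (hP n) hW qα (hVq n qα fun x => (hfα x).1)
    have hub : (α - 1)⁻¹ * Real.log (∑ y, (∑ x, P n x * W x y ^ α) * qα y ^ (1 - α))
        ≤ renyiCap α W := by
      rw [V_eq]
      exact avg_le hα1 (hP n) (fun x => (hfα x).1) (fun x => (hfα x).2)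
    apply exp_le_of_div_log_le hα1 hpos
    have h3 := hPI n
    linarith
  have hUbound : ∀ n : ℕ, Real.exp ((α - 1) * (Cη - renyiCap α W + 1/(n+1)))
      ≤ ∑ y, (m n y) ^ α * qη y ^ (1 - α) := by
    intro n
    obtain ⟨hpos, hid⟩ := sibson hα0 hα1 (hP n) hW qη (hVq n qη fun x => (hfη x).1)
    have hub : (α - 1)⁻¹ * Real.log (∑ y, (∑ x, P n x * W x y ^ α) * qη y ^ (1 - α))
        ≤ Cη := by
      rw [V_eq]
      exact avg_le hα1 (hP n) (fun x => (hfη x).1) (fun x => (hfη x).2)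
    apply exp_le_of_div_log_le hα1 hpos
    have h3 := hPI n
    linarith
  obtain ⟨L, φ, hLpmf, hφ, hconv⟩ := pmf_tendsto_subseq m hmpmf
  have hεtend : Tendsto (fun k => 1/((φ k : ℝ)+1)) atTop (𝓝 0) :=
    tendsto_one_div_add_atTop_nhds_zero_nat.comp hφ.tendsto_atTop
  have hTconv : Tendsto (fun k => ∑ y, (m (φ k) y) ^ α * qα y ^ (1 - α)) atTop
      (𝓝 (∑ y, L y ^ α * qα y ^ (1 - α))) :=
    tendsto_sum_rpow hα0 (fun y => hconv y)
  have hexp1 : Tendsto (fun k => Real.exp ((α - 1) * (1/((φ k : ℝ)+1)))) atTop (𝓝 1) := by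
    have h3 := hεtend.const_mul (α - 1)
    rw [mul_zero] at h3
    have h4 := (Real.continuous_exp.tendsto 0).comp h3
    rw [Real.exp_zero] at h4
    exact h4
  have hT1 : 1 ≤ ∑ y, L y ^ α * qα y ^ (1 - α) :=
    le_of_tendsto_of_tendsto' hexp1 hTconv (fun k => hTbound (φ k))
  have hLqα : L = qα := eq_of_sum_gm_eq_one hα0 hα1 hLpmf hqα hT1
  have hUconv : Tendsto (fun k => ∑ y, (m (φ k) y) ^ α * qη y ^ (1 - α)) atTop
      (𝓝 (∑ y, qα y ^ α * qη y ^ (1 - α))) := by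
    have := tendsto_sum_rpow hα0 (L := L) (c := fun y => qη y ^ (1 - α)) (fun y => hconv y)
    rwa [hLqα] at this
  have hexp2 : Tendsto (fun k => Real.exp ((α - 1) * (Cη - renyiCap α W + 1/((φ k : ℝ)+1))))
      atTop (𝓝 (Real.exp ((α - 1) * (Cη - renyiCap α W)))) := by
    have h5 : Tendsto (fun k => Cη - renyiCap α W + 1/((φ k : ℝ)+1)) atTop
        (𝓝 (Cη - renyiCap α W + 0)) := tendsto_const_nhds.add hεtend
    rw [add_zero] at h5
    exact (Real.continuous_exp.tendsto _).comp (h5.const_mul (α - 1))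
  have hU : Real.exp ((α - 1) * (Cη - renyiCap α W)) ≤ ∑ y, qα y ^ α * qη y ^ (1 - α) :=
    le_of_tendsto_of_tendsto' hexp2 hUconv (fun k => hUbound (φ k))
  exact ⟨lt_of_lt_of_le (Real.exp_pos _) hU, div_log_le_of_exp_le hα1 hU⟩

lemma main_one [Nonempty X] (hW : ∀ x, IsPMF (W x)) {qα qη : Y → ℝ}
    (hqα : IsPMF qα) (hqη : IsPMF qη)
    (hfα : ∀ x, (∀ y, qα y = 0 → W x y = 0) ∧
      ∑ y, W x y * Real.log (W x y / qα y) ≤ renyiCap 1 W)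
    (hfη : ∀ x, (∀ y, qη y = 0 → W x y = 0) ∧
      ∑ y, W x y * Real.log (W x y / qη y) ≤ renyiCap 1 W) :
    qα = qη := by
  classical
  choose P hP hPI using fun n : ℕ => cap_approx (α := 1) hW one_pos n
  set m : ℕ → Y → ℝ := fun n y => ∑ x, P n x * W x y with hm
  have hmpmf : ∀ n, IsPMF (m n) := fun n => output_pmf (hP n) hW
  have hbound : ∀ (q : Y → ℝ), IsPMF q → (∀ x, (∀ y, q y = 0 → W x y = 0) ∧
      ∑ y, W x y * Real.log (W x y / q y) ≤ renyiCap 1 W) →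
      ∀ n : ℕ, ∑ y, m n y * Real.log (m n y / q y) ≤ 1/(n+1) := by
    intro q hq hf n
    have hid := sibsonKL (hP n) hW q (fun y hy x => (hf x).1 y hy)
    have havg : ∑ x, P n x * ∑ y, W x y * Real.log (W x y / q y) ≤ renyiCap 1 W := by
      calc ∑ x, P n x * ∑ y, W x y * Real.log (W x y / q y)
          ≤ ∑ x, P n x * renyiCap 1 W :=
            Finset.sum_le_sum fun x _ => mul_le_mul_of_nonneg_left (hf x).2 ((hP n).1 x)
        _ = renyiCap 1 W := by rw [← Finset.sum_mul, (hP n).2, one_mul]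
    have h3 := hPI n
    linarith
  obtain ⟨L, φ, hLpmf, hφ, hconv⟩ := pmf_tendsto_subseq m hmpmf
  have hεtend : Tendsto (fun k => 1/((φ k : ℝ)+1)) atTop (𝓝 0) :=
    tendsto_one_div_add_atTop_nhds_zero_nat.comp hφ.tendsto_atTop
  have hLim : ∀ (q : Y → ℝ), IsPMF q → (∀ x, (∀ y, q y = 0 → W x y = 0) ∧
      ∑ y, W x y * Real.log (W x y / q y) ≤ renyiCap 1 W) → L = q := by
    intro q hq hf
    have hz : ∀ y, q y = 0 → ∀ k : ℕ, m k y = 0 := fun y hy k =>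
      Finset.sum_eq_zero fun x _ => by rw [(hf x).1 y hy, mul_zero]
    have hKconv := tendsto_KL (q := q) (m := fun k => m (φ k)) (L := L)
      (fun y => hconv y) (fun y hy k => hz y hy (φ k))
    have hKle : ∑ y, L y * Real.log (L y / q y) ≤ 0 :=
      le_of_tendsto_of_tendsto' hKconv hεtend (fun k => hbound q hq hf (φ k))
    refine kl_eq_of_nonpos hLpmf hq (fun y hy => ?_) hKle
    have hzero : (fun k => m (φ k) y) = fun _ => (0:ℝ) := funext fun k => hz y hy (φ k)
    have h1 := hconv y
    rw [hzero] at h1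
    exact tendsto_nhds_unique h1 tendsto_const_nhds
  exact (hLim qα hqα hfα).symm.trans (hLim qη hqη hfη)

end Main

/-- `C_η(W) − C_α(W) ≥ D_α(q_{α,W}‖q_{η,W})` for `0 < α ≤ η ≤ 1`. -/
theorem renyiCap_diff_ge_center_div {X Y : Type*} [Fintype X] [Fintype Y] [Nonempty X]
    (W : X → Y → ℝ) (hW : ∀ x, IsPMF (W x)) (α η : ℝ) (h0 : 0 < α) (hαη : α ≤ η)
    (hη : η ≤ 1) (qα qη : Y → ℝ)
    (hqα : IsPMF qα) (hqαc : (⨆ x, renyiDivE α (W x) qα) = ENNReal.ofReal (renyiCap α W))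
    (hqη : IsPMF qη) (hqηc : (⨆ x, renyiDivE η (W x) qη) = ENNReal.ofReal (renyiCap η W)) :
    renyiDivE α qα qη ≤ ENNReal.ofReal (renyiCap η W - renyiCap α W) := by
  classical
  by_cases hα1 : α = 1
  · have hη1 : η = 1 := by
      have h1 : (1:ℝ) ≤ η := by rw [← hα1]; exact hαη
      exact le_antisymm hη h1
    subst hα1; subst hη1
    obtain ⟨hC0, hfα⟩ := cap_facts_one hW hqα hqαc
    obtain ⟨-, hfη⟩ := cap_facts_one hW hqη hqηc
    have heq : qα = qη := main_one hW hqα hqη hfα hfη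
    rw [heq, sub_self]
    unfold renyiDivE
    rw [if_pos rfl, if_pos (fun y (h : qη y = 0) => h)]
    have hz : renyiDiv 1 qη qη = 0 := by
      unfold renyiDiv
      rw [if_pos rfl]
      apply Finset.sum_eq_zero
      intro y _
      by_cases h : qη y = 0
      · rw [h, zero_mul]
      · rw [div_self h, Real.log_one, mul_zero]
    rw [hz]
  · have hα1' : α < 1 := lt_of_le_of_ne (le_trans hαη hη) hα1
    obtain ⟨hCα0, hfα⟩ := cap_facts_lt h0 hα1' hW hqα hqαc
    have hfη : ∀ x, 0 < ∑ y, W x y ^ α * qη y ^ (1 - α) ∧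
        (α - 1)⁻¹ * Real.log (∑ y, W x y ^ α * qη y ^ (1 - α)) ≤ renyiCap η W := by
      by_cases hη1 : η = 1
      · subst hη1
        obtain ⟨hC1, hfη1⟩ := cap_facts_one hW hqη hqηc
        intro x
        have habs := (hfη1 x).1
        have hpos : 0 < ∑ y, W x y ^ α * qη y ^ (1 - α) := by
          rw [sum_gm_pos_iff h0 hα1' (hW x).1 hqη.1]
          obtain ⟨y0, hy0⟩ := (hW x).exists_pos
          have hq0 : 0 < qη y0 := by
            rcases eq_or_lt_of_le (hqη.1 y0) with h' | h'
            · exact absurd (habs y0 h'.symm) (by linarith)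
            · exact h'
          exact ⟨y0, hy0, hq0⟩
        exact ⟨hpos, le_trans (renyi_mono_one h0 hα1' (hW x) hqη habs) (hfη1 x).2⟩
      · have hη1' : η < 1 := lt_of_le_of_ne hη hη1
        obtain ⟨hCη0, hfηlt⟩ := cap_facts_lt (lt_of_lt_of_le h0 hαη) hη1' hW hqη hqηc
        intro x
        have hposη := (hfηlt x).1
        have hpos : 0 < ∑ y, W x y ^ α * qη y ^ (1 - α) := by
          rw [sum_gm_pos_iff h0 hα1' (hW x).1 hqη.1]
          exact (sum_gm_pos_iff (lt_of_lt_of_le h0 hαη) hη1' (hW x).1 hqη.1).1 hposη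
        refine ⟨hpos, ?_⟩
        rcases eq_or_lt_of_le hαη with heq | hlt
        · subst heq
          exact (hfηlt x).2
        · exact le_trans (renyi_mono_lt h0 hlt hη1' (hW x) hqη.1) (hfηlt x).2
    obtain ⟨hUpos, hUle⟩ := main_lt h0 hα1' hW hqα hqη hfα hfη
    unfold renyiDivE
    rw [if_neg hα1, if_pos hUpos]
    apply ENNReal.ofReal_le_ofReal
    unfold renyiDiv
    rw [if_neg hα1]
    exact hUle
end

section
/- Let W be a stochastic matrix from a finite set X to pmfs on a finite set Y with C_0(W) ≠ C_1(W), and let R ∈ (C_0(W), C_1(W)). Then there exists φ ∈ (0,1) with C_φ(W) = R, and there exists η ∈ (φ,1) with ((1-η)/η)·C_η(W) = E_sp(R,W), the sphere packing exponent at rate R. -/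
open Real MeasureTheory Filter

section Aux

variable {X Y : Type*} [Fintype X] [Fintype Y]

noncomputable def Afun (W : X → Y → ℝ) (P : X → ℝ) (α : ℝ) (y : Y) : ℝ :=
  ∑ x, P x * W x y ^ α

noncomputable def Sfun (W : X → Y → ℝ) (P : X → ℝ) (α : ℝ) : ℝ :=
  ∑ y, (Afun W P α y) ^ α⁻¹

variable {W : X → Y → ℝ} {P : X → ℝ} (hW : ∀ x, IsPMF (W x)) (hP : IsPMF P)
include hW hP
set_option linter.unusedSectionVars false

lemma Afun_nonneg (α : ℝ) (y : Y) : 0 ≤ Afun W P α y := by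
  refine Finset.sum_nonneg fun x _ => mul_nonneg (hP.1 x) (Real.rpow_nonneg ((hW x).1 y) α)

lemma Sfun_nonneg (α : ℝ) : 0 ≤ Sfun W P α :=
  Finset.sum_nonneg fun y _ => Real.rpow_nonneg (Afun_nonneg hW hP α y) _

lemma exists_P_pos : ∃ x, 0 < P x := by
  by_contra h
  push_neg at h
  have : ∑ x, P x = 0 := le_antisymm (Finset.sum_nonpos fun x _ => h x)
    (Finset.sum_nonneg fun x _ => hP.1 x)
  rw [hP.2] at this; norm_num at this

lemma Sfun_pos {α : ℝ} (hα : 0 < α) : 0 < Sfun W P α := by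
  obtain ⟨x0, hx0⟩ := exists_P_pos (W:=W) hW hP
  have key : ∀ y, P x0 ^ α⁻¹ * W x0 y ≤ (Afun W P α y) ^ α⁻¹ := by
    intro y
    have h1 : P x0 * W x0 y ^ α ≤ Afun W P α y := by
      refine Finset.single_le_sum (f := fun x => P x * W x y ^ α) ?_ (Finset.mem_univ x0)
      exact fun x _ => mul_nonneg (hP.1 x) (Real.rpow_nonneg ((hW x).1 y) α)
    calc P x0 ^ α⁻¹ * W x0 y = (P x0 * W x0 y ^ α) ^ α⁻¹ := by
          rw [Real.mul_rpow hx0.le (Real.rpow_nonneg ((hW x0).1 y) α),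
            ← Real.rpow_mul ((hW x0).1 y), mul_inv_cancel₀ hα.ne', Real.rpow_one]
      _ ≤ (Afun W P α y) ^ α⁻¹ :=
          Real.rpow_le_rpow (mul_nonneg hx0.le (Real.rpow_nonneg ((hW x0).1 y) α)) h1
            (by positivity)
  have h2 : P x0 ^ α⁻¹ * 1 ≤ Sfun W P α := by
    rw [← (hW x0).2, Finset.mul_sum]
    exact Finset.sum_le_sum fun y _ => key y
  have : (0:ℝ) < P x0 ^ α⁻¹ := Real.rpow_pos_of_pos hx0 _
  nlinarith

lemma renyiInfo_eq {α : ℝ} (hα : α ≠ 1) :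
    renyiInfo α P W = (α / (α - 1)) * Real.log (Sfun W P α) := by
  simp [renyiInfo, hα, Sfun, Afun]

end Aux

section Aux2

variable {X Y : Type*} [Fintype X] [Fintype Y]
variable {W : X → Y → ℝ} {P : X → ℝ} (hW : ∀ x, IsPMF (W x)) (hP : IsPMF P)
include hW hP
set_option linter.unusedSectionVars false

lemma Sfun_mono {α β : ℝ} (hα : 0 < α) (hαβ : α ≤ β) : Sfun W P α ≤ Sfun W P β := by
  have hβ : 0 < β := hα.trans_le hαβ
  refine Finset.sum_le_sum fun y _ => ?_
  have jensen := Real.rpow_arith_mean_le_arith_mean_rpow Finset.univ P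
      (fun x => W x y ^ α) (fun x _ => hP.1 x) hP.2
      (fun x _ => Real.rpow_nonneg ((hW x).1 y) α) (p := β / α)
      ((one_le_div hα).mpr hαβ)
  have hz : ∀ x, (W x y ^ α) ^ (β / α) = W x y ^ β := by
    intro x
    rw [← Real.rpow_mul ((hW x).1 y), mul_div_cancel₀ β hα.ne']
  simp only [hz] at jensen
  have step : (Afun W P α y) ^ (β / α) ≤ Afun W P β y := jensen
  calc (Afun W P α y) ^ α⁻¹ = ((Afun W P α y) ^ (β / α)) ^ β⁻¹ := by
        rw [← Real.rpow_mul (Afun_nonneg hW hP α y)]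
        congr 1
        field_simp
      _ ≤ (Afun W P β y) ^ β⁻¹ :=
        Real.rpow_le_rpow (Real.rpow_nonneg (Afun_nonneg hW hP α y) _) step (by positivity)

lemma info_mono {α β : ℝ} (hα : 0 < α) (hαβ : α ≤ β) (hβ : β < 1) :
    renyiInfo α P W ≤ renyiInfo β P W := by
  rcases eq_or_lt_of_le hαβ with rfl | hlt
  · exact le_refl _
  have hα1 : α < 1 := hlt.trans hβ
  have hβ0 : 0 < β := hα.trans hlt
  have h1α : (0:ℝ) < 1 - α := by linarith
  have h1β : (0:ℝ) < 1 - β := by linarith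
  have hSα : 0 < Sfun W P α := Sfun_pos hW hP hα
  have hSβ : 0 < Sfun W P β := Sfun_pos hW hP hβ0
  set Q : Y → ℝ := fun y => Afun W P β y ^ β⁻¹ / Sfun W P β with hQdef
  have hQ0 : ∀ y, 0 ≤ Q y := fun y =>
    div_nonneg (Real.rpow_nonneg (Afun_nonneg hW hP β y) _) hSβ.le
  have hQsum : ∑ y, Q y = 1 := by
    rw [hQdef]
    rw [← Finset.sum_div]
    rw [show (∑ y, Afun W P β y ^ β⁻¹) = Sfun W P β from rfl, div_self hSβ.ne']
  set T : ℝ → ℝ := fun γ => ∑ y, Afun W P γ y * Q y ^ (1 - γ) with hTdef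
  -- step 1 : T β = Sβ ^ β
  have h1 : T β = Sfun W P β ^ β := by
    have per : ∀ y, Afun W P β y * Q y ^ (1 - β)
        = Afun W P β y ^ β⁻¹ / Sfun W P β ^ (1 - β) := by
      intro y
      have hA0 : 0 ≤ Afun W P β y := Afun_nonneg hW hP β y
      rw [hQdef]
      rw [Real.div_rpow (Real.rpow_nonneg hA0 _) hSβ.le]
      rw [← Real.rpow_mul hA0]
      rw [mul_div_assoc']
      congr 1
      rw [eq_comm]
      conv_lhs => rw [show (β⁻¹:ℝ) = 1 + β⁻¹ * (1 - β) by field_simp; ring]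
      rw [Real.rpow_add' hA0 (by
        rw [show (1:ℝ) + β⁻¹ * (1 - β) = β⁻¹ by field_simp; ring]
        exact inv_ne_zero hβ0.ne'), Real.rpow_one]
    simp only [hTdef, per]
    rw [← Finset.sum_div]
    show Sfun W P β / Sfun W P β ^ (1 - β) = Sfun W P β ^ β
    rw [eq_comm, eq_div_iff (by positivity), ← Real.rpow_add hSβ,
      show β + (1 - β) = 1 by ring, Real.rpow_one]
  -- step 2 : T α ≤ Sα ^ α  (Hölder)
  have h2 : T α ≤ Sfun W P α ^ α := by
    have hpq : (α⁻¹).HolderConjugate (1 - α)⁻¹ := by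
      rw [Real.holderConjugate_iff]
      constructor
      · rw [lt_inv_comm₀] <;> simp [hα, hα1]
      · rw [inv_inv, inv_inv]; ring
    have holder := Real.inner_le_Lp_mul_Lq Finset.univ
      (fun y => Afun W P α y) (fun y => Q y ^ (1 - α)) hpq
    have e1 : ∀ y, |Afun W P α y| ^ α⁻¹ = Afun W P α y ^ α⁻¹ := fun y => by
      rw [abs_of_nonneg (Afun_nonneg hW hP α y)]
    have e2 : ∀ y, |Q y ^ (1 - α)| ^ (1 - α)⁻¹ = Q y := fun y => by
      rw [abs_of_nonneg (Real.rpow_nonneg (hQ0 y) _), ← Real.rpow_mul (hQ0 y),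
        mul_inv_cancel₀ h1α.ne', Real.rpow_one]
    simp only [e1, e2] at holder
    calc T α ≤ (∑ y, Afun W P α y ^ α⁻¹) ^ (1 / α⁻¹) * (∑ y, Q y) ^ (1 / (1 - α)⁻¹) := holder
      _ = Sfun W P α ^ α := by
        rw [hQsum, one_div, one_div, inv_inv, inv_inv, Real.one_rpow, mul_one]
        rfl
  -- step 3 : (T β) ^ ((1-α)/(1-β)) ≤ T α  (Jensen)
  have h3 : T β ^ ((1 - α) / (1 - β)) ≤ T α := by
    set w : X × Y → ℝ := fun p => P p.1 * W p.1 p.2 with hwdef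
    set Z : X × Y → ℝ := fun p => Q p.2 / W p.1 p.2 with hZdef
    have hw0 : ∀ p : X × Y, 0 ≤ w p := fun p => mul_nonneg (hP.1 p.1) ((hW p.1).1 p.2)
    have hZ0 : ∀ p : X × Y, 0 ≤ Z p := fun p => div_nonneg (hQ0 p.2) ((hW p.1).1 p.2)
    have hwsum : ∑ p : X × Y, w p = 1 := by
      rw [Fintype.sum_prod_type]
      have : ∀ x, ∑ y, P x * W x y = P x := fun x => by
        rw [← Finset.mul_sum, (hW x).2, mul_one]
      simp only [hwdef, this, hP.2]
    have Trw : ∀ γ : ℝ, 0 < γ → T γ = ∑ p : X × Y, w p * Z p ^ (1 - γ) := by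
      intro γ hγ
      rw [Fintype.sum_prod_type, hTdef]
      simp only
      rw [Finset.sum_comm]
      refine Finset.sum_congr rfl fun y _ => ?_
      rw [Afun, Finset.sum_mul]
      refine Finset.sum_congr rfl fun x _ => ?_
      rcases eq_or_lt_of_le ((hW x).1 y) with hw0' | hwpos
      · rw [← hw0', Real.zero_rpow hγ.ne']
        simp [hwdef, hZdef, ← hw0']
      · have hWne : W x y ≠ 0 := hwpos.ne'
        rw [hwdef, hZdef]
        simp only
        rw [Real.div_rpow (hQ0 y) hwpos.le]
        rw [div_eq_mul_inv, ← mul_assoc]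
        have : P x * W x y * Q y ^ (1 - γ) * (W x y ^ (1 - γ))⁻¹
            = P x * (W x y * (W x y ^ (1 - γ))⁻¹) * Q y ^ (1 - γ) := by ring
        rw [this]
        congr 1
        congr 1
        rw [eq_mul_inv_iff_mul_eq₀ (Real.rpow_pos_of_pos hwpos _).ne', ← Real.rpow_add hwpos,
          show γ + (1 - γ) = 1 by ring, Real.rpow_one]
    have jensen := Real.rpow_arith_mean_le_arith_mean_rpow Finset.univ w
      (fun p => Z p ^ (1 - β)) (fun p _ => hw0 p) hwsum
      (fun p _ => Real.rpow_nonneg (hZ0 p) _) (p := (1 - α) / (1 - β))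
      ((one_le_div h1β).mpr (by linarith))
    have ez : ∀ p : X × Y, (Z p ^ (1 - β)) ^ ((1 - α) / (1 - β)) = Z p ^ (1 - α) := by
      intro p
      rw [← Real.rpow_mul (hZ0 p), mul_div_cancel₀ _ h1β.ne']
    simp only [ez] at jensen
    rw [Trw β hβ0, Trw α hα]
    exact jensen
  -- combine
  have key : (Sfun W P β ^ β) ^ ((1 - α) / (1 - β)) ≤ Sfun W P α ^ α := by
    rw [← h1]; exact le_trans h3 h2
  have hpos : (0:ℝ) < (Sfun W P β ^ β) ^ ((1 - α) / (1 - β)) :=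
    Real.rpow_pos_of_pos (Real.rpow_pos_of_pos hSβ _) _
  have hlog := Real.log_le_log hpos key
  rw [Real.log_rpow (Real.rpow_pos_of_pos hSβ _), Real.log_rpow hSβ,
    Real.log_rpow hSα] at hlog
  set a := Real.log (Sfun W P α)
  set b := Real.log (Sfun W P β)
  rw [renyiInfo_eq hW hP hα1.ne, renyiInfo_eq hW hP hβ.ne]
  have key2 : β * b * (1 - α) ≤ α * a * (1 - β) := by
    have h' : ((1 - α) * (β * b)) / (1 - β) ≤ α * a := by
      rw [div_mul_eq_mul_div] at hlog; exact hlog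
    have h'' := (div_le_iff₀ h1β).mp h'
    nlinarith [h'']
  have hle : (β * b) / (1 - β) ≤ (α * a) / (1 - α) :=
    (div_le_div_iff₀ h1β h1α).mpr (by nlinarith [key2])
  have e3 : α / (α - 1) * a = -((α * a) / (1 - α)) := by
    rw [show α - 1 = -(1 - α) by ring, div_neg, neg_mul, div_mul_eq_mul_div]
  have e4 : β / (β - 1) * b = -((β * b) / (1 - β)) := by
    rw [show β - 1 = -(1 - β) by ring, div_neg, neg_mul, div_mul_eq_mul_div]
  rw [e3, e4]
  linarith

end Aux2

section Aux3

variable {X Y : Type*} [Fintype X] [Fintype Y]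
variable {W : X → Y → ℝ} {P : X → ℝ} (hW : ∀ x, IsPMF (W x)) (hP : IsPMF P)
include hW hP
set_option linter.unusedSectionVars false

lemma info_scaled_anti {α β : ℝ} (hα : 0 < α) (hαβ : α ≤ β) (hβ : β < 1) :
    ((1 - β) / β) * renyiInfo β P W ≤ ((1 - α) / α) * renyiInfo α P W := by
  have hβ0 : 0 < β := hα.trans_le hαβ
  have hα1 : α < 1 := lt_of_le_of_lt hαβ hβ
  have key : ∀ γ : ℝ, 0 < γ → γ < 1 →
      ((1 - γ) / γ) * renyiInfo γ P W = -Real.log (Sfun W P γ) := by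
    intro γ h0 h1
    rw [renyiInfo_eq hW hP h1.ne, ← mul_assoc,
      show (1 - γ) / γ * (γ / (γ - 1)) = -1 by
        have hne : γ - 1 ≠ 0 := sub_ne_zero.mpr h1.ne
        field_simp; ring]
    ring
  rw [key α hα hα1, key β hβ0 hβ]
  have := Real.log_le_log (Sfun_pos hW hP hα) (Sfun_mono hW hP hα hαβ)
  linarith

lemma nonempty_Y [Nonempty X] : Nonempty Y := by
  by_contra h
  have : IsEmpty Y := not_nonempty_iff.mp h
  have h1 := (hW (Classical.arbitrary X)).2
  rw [Finset.univ_eq_empty, Finset.sum_empty] at h1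
  norm_num at h1

lemma info_le_log_card [Nonempty X] {α : ℝ} (hα : 0 < α) (hα1 : α < 1) :
    renyiInfo α P W ≤ Real.log (Fintype.card Y) := by
  have hY : Nonempty Y := nonempty_Y hW hP
  set n : ℝ := (Fintype.card Y : ℝ) with hn
  have hn1 : 1 ≤ n := by
    rw [hn]; exact_mod_cast Fintype.card_pos
  have hn0 : 0 < n := lt_of_lt_of_le one_pos hn1
  -- ∑ y, Afun ≥ 1
  have hsumA : 1 ≤ ∑ y, Afun W P α y := by
    have per : ∀ x y, P x * W x y ≤ P x * W x y ^ α := by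
      intro x y
      rcases eq_or_lt_of_le ((hW x).1 y) with h0 | hpos
      · rw [← h0, Real.zero_rpow hα.ne']
      · refine mul_le_mul_of_nonneg_left ?_ (hP.1 x)
        have hle1 : W x y ≤ 1 := by
          have := Finset.single_le_sum (f := fun y => W x y) (fun y _ => (hW x).1 y)
            (Finset.mem_univ y)
          rw [(hW x).2] at this; exact this
        calc W x y = W x y ^ (1:ℝ) := (Real.rpow_one _).symm
          _ ≤ W x y ^ α := Real.rpow_le_rpow_of_exponent_ge hpos hle1 hα1.le
    calc (1:ℝ) = ∑ x, P x * ∑ y, W x y := by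
          simp only [(fun x => (hW x).2 : ∀ x, ∑ y, W x y = 1), mul_one, hP.2]
      _ = ∑ y, ∑ x, P x * W x y := by
          rw [Finset.sum_comm]
          exact Finset.sum_congr rfl fun x _ => Finset.mul_sum _ _ _
      _ ≤ ∑ y, Afun W P α y :=
          Finset.sum_le_sum fun y _ => Finset.sum_le_sum fun x _ => per x y
  -- Jensen with uniform weights
  have jensen := Real.rpow_arith_mean_le_arith_mean_rpow Finset.univ
    (fun _ : Y => n⁻¹) (fun y => Afun W P α y) (fun y _ => by positivity)
    (by
      rw [Finset.sum_const, Finset.card_univ, nsmul_eq_mul, ← hn, mul_inv_cancel₀ hn0.ne'])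
    (fun y _ => Afun_nonneg hW hP α y) (p := α⁻¹)
    (one_le_inv_iff₀.mpr ⟨hα, hα1.le⟩)
  have lhs_ge : (n⁻¹ : ℝ) ^ α⁻¹ ≤ (∑ y, n⁻¹ * Afun W P α y) ^ α⁻¹ := by
    refine Real.rpow_le_rpow (by positivity) ?_ (by positivity)
    rw [← Finset.mul_sum]
    calc (n⁻¹ : ℝ) = n⁻¹ * 1 := (mul_one _).symm
      _ ≤ n⁻¹ * ∑ y, Afun W P α y := by
          refine mul_le_mul_of_nonneg_left hsumA (by positivity)
  have rhs_eq : ∑ y, n⁻¹ * Afun W P α y ^ α⁻¹ = n⁻¹ * Sfun W P α := by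
    rw [← Finset.mul_sum]; rfl
  have hS_ge : n * (n⁻¹ : ℝ) ^ α⁻¹ ≤ Sfun W P α := by
    have h1 : (n⁻¹ : ℝ) ^ α⁻¹ ≤ n⁻¹ * Sfun W P α := le_trans lhs_ge (by rw [← rhs_eq]; exact jensen)
    calc n * (n⁻¹:ℝ) ^ α⁻¹ ≤ n * (n⁻¹ * Sfun W P α) :=
          mul_le_mul_of_nonneg_left h1 hn0.le
      _ = Sfun W P α := by field_simp
  have hlog_ge : (1 - α⁻¹) * Real.log n ≤ Real.log (Sfun W P α) := by
    have hpos : (0:ℝ) < n * (n⁻¹:ℝ) ^ α⁻¹ := by positivity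
    have := Real.log_le_log hpos hS_ge
    rw [Real.log_mul hn0.ne' (by positivity), Real.log_rpow (by positivity),
      Real.log_inv] at this
    calc (1 - α⁻¹) * Real.log n = Real.log n + α⁻¹ * (-Real.log n) := by ring
      _ ≤ Real.log (Sfun W P α) := this
  rw [renyiInfo_eq hW hP hα1.ne]
  have hc : α / (α - 1) < 0 := div_neg_of_pos_of_neg hα (by linarith)
  calc α / (α - 1) * Real.log (Sfun W P α)
      ≤ α / (α - 1) * ((1 - α⁻¹) * Real.log n) :=
        mul_le_mul_of_nonpos_left hlog_ge hc.le
    _ = Real.log n := by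
        rw [← mul_assoc, show α / (α - 1) * (1 - α⁻¹) = 1 by
          have h1 : α - 1 ≠ 0 := sub_ne_zero.mpr hα1.ne
          field_simp, one_mul]

omit hP in
open Classical in
lemma info_delta {α : ℝ} (hα : 0 < α) (hα1 : α ≠ 1) (x0 : X) :
    renyiInfo α (fun x => if x = x0 then (1:ℝ) else 0) W = 0 := by
  have hA : ∀ y, (∑ x, (if x = x0 then (1:ℝ) else 0) * W x y ^ α) = W x0 y ^ α := by
    intro y
    rw [Finset.sum_eq_single x0]
    · simp
    · intro b _ hb; simp [hb]
    · intro h; exact absurd (Finset.mem_univ x0) h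
  rw [renyiInfo]
  rw [if_neg hα1]
  simp only [hA]
  have : ∀ y, (W x0 y ^ α) ^ α⁻¹ = W x0 y := by
    intro y
    rw [← Real.rpow_mul ((hW x0).1 y), mul_inv_cancel₀ hα.ne', Real.rpow_one]
  simp only [this, (hW x0).2, Real.log_one, mul_zero]

omit hW hP in
open Classical in
lemma isPMF_delta (x0 : X) : IsPMF (fun x => if x = x0 then (1:ℝ) else 0) := by
  constructor
  · intro x; by_cases h : x = x0 <;> simp [h]
  · rw [Finset.sum_ite_eq' Finset.univ x0 (fun _ => (1:ℝ))]
    simp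

end Aux3

section Aux4

variable {X Y : Type*} [Fintype X] [Fintype Y] [Nonempty X]
variable {W : X → Y → ℝ} (hW : ∀ x, IsPMF (W x))
include hW
set_option linter.unusedSectionVars false

open Classical in
lemma zero_mem_capSet {α : ℝ} (hα : 0 < α) (hα1 : α ≠ 1) :
    (0:ℝ) ∈ {c | ∃ P : X → ℝ, IsPMF P ∧ c = renyiInfo α P W} := by
  obtain ⟨x0⟩ := (inferInstance : Nonempty X)
  exact ⟨fun x => if x = x0 then (1:ℝ) else 0, isPMF_delta x0,
    (info_delta hW hα hα1 x0).symm⟩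

lemma capSet_bddAbove {α : ℝ} (hα : 0 < α) (hα1 : α < 1) :
    BddAbove {c | ∃ P : X → ℝ, IsPMF P ∧ c = renyiInfo α P W} := by
  refine ⟨Real.log (Fintype.card Y), fun c hc => ?_⟩
  obtain ⟨P, hP, rfl⟩ := hc
  exact info_le_log_card hW hP hα hα1

lemma cap_nonneg {α : ℝ} (hα : 0 < α) (hα1 : α < 1) : 0 ≤ renyiCap α W :=
  le_csSup (capSet_bddAbove hW hα hα1) (zero_mem_capSet hW hα hα1.ne)

lemma cap_le_log {α : ℝ} (hα : 0 < α) (hα1 : α < 1) :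
    renyiCap α W ≤ Real.log (Fintype.card Y) := by
  refine csSup_le ⟨0, zero_mem_capSet hW hα hα1.ne⟩ fun c hc => ?_
  obtain ⟨P, hP, rfl⟩ := hc
  exact info_le_log_card hW hP hα hα1

lemma info_le_cap {α : ℝ} (hα : 0 < α) (hα1 : α < 1) {P : X → ℝ} (hP : IsPMF P) :
    renyiInfo α P W ≤ renyiCap α W :=
  le_csSup (capSet_bddAbove hW hα hα1) ⟨P, hP, rfl⟩

lemma cap_mono {α β : ℝ} (hα : 0 < α) (hαβ : α ≤ β) (hβ : β < 1) :
    renyiCap α W ≤ renyiCap β W := by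
  have hα1 : α < 1 := lt_of_le_of_lt hαβ hβ
  refine csSup_le ⟨0, zero_mem_capSet hW hα hα1.ne⟩ fun c hc => ?_
  obtain ⟨P, hP, rfl⟩ := hc
  exact le_trans (info_mono hW hP hα hαβ hβ) (info_le_cap hW (hα.trans_le hαβ) hβ hP)

lemma capg_anti {α β : ℝ} (hα : 0 < α) (hαβ : α ≤ β) (hβ : β < 1) :
    ((1 - β) / β) * renyiCap β W ≤ ((1 - α) / α) * renyiCap α W := by
  have hβ0 : 0 < β := hα.trans_le hαβ
  have hα1 : α < 1 := lt_of_le_of_lt hαβ hβ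
  have hb : (0:ℝ) < (1 - β) / β := div_pos (by linarith) hβ0
  set K := ((1 - α) / α) * renyiCap α W with hK
  have hcsup : renyiCap β W ≤ K / ((1 - β) / β) := by
    refine csSup_le ⟨0, zero_mem_capSet hW hβ0 hβ.ne⟩ fun c hc => ?_
    obtain ⟨P, hP, rfl⟩ := hc
    have h1 : ((1 - β) / β) * renyiInfo β P W ≤ ((1 - α) / α) * renyiInfo α P W :=
      info_scaled_anti hW hP hα hαβ hβ
    have h2 : ((1 - α) / α) * renyiInfo α P W ≤ K := by
      rw [hK]
      exact mul_le_mul_of_nonneg_left (info_le_cap hW hα hα1 hP)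
        (div_nonneg (by linarith) hα.le)
    rw [le_div_iff₀ hb]
    calc renyiInfo β P W * ((1 - β) / β) = ((1 - β) / β) * renyiInfo β P W := mul_comm _ _
      _ ≤ K := le_trans h1 h2
  calc ((1 - β) / β) * renyiCap β W ≤ ((1 - β) / β) * (K / ((1 - β) / β)) :=
        mul_le_mul_of_nonneg_left hcsup hb.le
    _ = K := by rw [mul_comm, div_mul_cancel₀ _ hb.ne']

lemma cap_continuousAt {a : ℝ} (ha : a ∈ Set.Ioo (0:ℝ) 1) :
    ContinuousAt (fun α => renyiCap α W) a := by
  obtain ⟨ha0, ha1⟩ := ha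
  set f := fun α => renyiCap (X := X) (Y := Y) α W with hf
  set c : ℝ → ℝ := fun x => (x * (1 - a)) / ((1 - x) * a) with hc
  have key : ∀ x ∈ Set.Ioo (0:ℝ) 1,
      min (f a) (c x * f a) ≤ f x ∧ f x ≤ max (f a) (c x * f a) := by
    rintro x ⟨hx0, hx1⟩
    have hfx : f x = (x / (1 - x)) * (((1 - x) / x) * f x) := by
      have h1 : (1:ℝ) - x ≠ 0 := by linarith
      have h2 : x ≠ 0 := hx0.ne'
      field_simp
    have hcc : c x * f a = (x / (1 - x)) * (((1 - a) / a) * f a) := by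
      rw [hc, ← mul_assoc]
      congr 1
      rw [div_mul_div_comm]
    have hxpos : (0:ℝ) ≤ x / (1 - x) := div_nonneg hx0.le (by linarith)
    rcases le_total x a with hxa | hax
    · constructor
      · refine le_trans (min_le_right _ _) ?_
        rw [hcc, hfx]
        exact mul_le_mul_of_nonneg_left (capg_anti hW hx0 hxa ha1) hxpos
      · exact le_trans (cap_mono hW hx0 hxa ha1) (le_max_left _ _)
    · constructor
      · exact le_trans (min_le_left _ _) (cap_mono hW ha0 hax hx1)
      · refine le_trans ?_ (le_max_right _ _)
        rw [hcc, hfx]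
        exact mul_le_mul_of_nonneg_left (capg_anti hW ha0 hax hx1) hxpos
  have hcc : ContinuousAt c a := by
    apply ContinuousAt.div
    · fun_prop
    · fun_prop
    · exact (mul_pos (by linarith : (0:ℝ) < 1 - a) ha0).ne'
  have hca : c a = 1 := by
    rw [hc]
    simp only
    rw [mul_comm, div_self (mul_pos (by linarith : (0:ℝ) < 1 - a) ha0).ne']
  have hlow : Filter.Tendsto (fun x => min (f a) (c x * f a)) (nhds a) (nhds (f a)) := by
    have : Filter.Tendsto (fun x => c x * f a) (nhds a) (nhds (f a)) := by
      have : Filter.Tendsto (fun x => c x * f a) (nhds a) (nhds (c a * f a)) := (hcc.mul continuousAt_const : ContinuousAt (fun x => c x * f a) a)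
      rw [hca, one_mul] at this
      exact this
    have h2 := (tendsto_const_nhds : Filter.Tendsto (fun _ : ℝ => f a) (nhds a) (nhds (f a))).min this
    rw [min_self] at h2
    exact h2
  have hup : Filter.Tendsto (fun x => max (f a) (c x * f a)) (nhds a) (nhds (f a)) := by
    have : Filter.Tendsto (fun x => c x * f a) (nhds a) (nhds (f a)) := by
      have : Filter.Tendsto (fun x => c x * f a) (nhds a) (nhds (c a * f a)) := (hcc.mul continuousAt_const : ContinuousAt (fun x => c x * f a) a)
      rw [hca, one_mul] at this
      exact this
    have h2 := (tendsto_const_nhds : Filter.Tendsto (fun _ : ℝ => f a) (nhds a) (nhds (f a))).max this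
    rw [max_self] at h2
    exact h2
  have hmem : Set.Ioo (0:ℝ) 1 ∈ nhds a := isOpen_Ioo.mem_nhds ⟨ha0, ha1⟩
  refine tendsto_of_tendsto_of_tendsto_of_le_of_le' hlow hup ?_ ?_
  · exact Filter.eventually_of_mem hmem fun x hx => (key x hx).1
  · exact Filter.eventually_of_mem hmem fun x hx => (key x hx).2

end Aux4

section Aux5

variable {X Y : Type*} [Fintype X] [Fintype Y]
variable {W : X → Y → ℝ} {P : X → ℝ} (hW : ∀ x, IsPMF (W x)) (hP : IsPMF P)
include hW hP
set_option linter.unusedSectionVars false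

lemma info_tendsto_one :
    Filter.Tendsto (fun α => renyiInfo α P W) (nhdsWithin 1 (Set.Iio 1))
      (nhds (renyiInfo 1 P W)) := by
  classical
  set Q1 : Y → ℝ := fun y => ∑ x, P x * W x y with hQ1
  set D : Y → ℝ :=
    fun y => (∑ x, P x * W x y * Real.log (W x y)) - Q1 y * Real.log (Q1 y) with hD
  have hQ1nonneg : ∀ y, 0 ≤ Q1 y :=
    fun y => Finset.sum_nonneg fun x _ => mul_nonneg (hP.1 x) ((hW x).1 y)
  -- derivative of A
  have hAderiv : ∀ y, HasDerivAt (fun γ => Afun W P γ y)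
      (∑ x, P x * W x y * Real.log (W x y)) 1 := by
    intro y
    refine HasDerivAt.fun_sum fun x _ => ?_
    rcases eq_or_lt_of_le ((hW x).1 y) with h0 | hpos
    · have hev : (fun _ : ℝ => (0:ℝ)) =ᶠ[nhds 1] (fun γ : ℝ => P x * W x y ^ γ) := by
        refine Filter.eventually_of_mem (Ioi_mem_nhds one_pos) fun γ hγ => ?_
        show (0:ℝ) = P x * W x y ^ γ
        rw [← h0, Real.zero_rpow (ne_of_gt hγ), mul_zero]
      have heq : P x * W x y * Real.log (W x y) = 0 := by rw [← h0]; ring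
      rw [heq]
      exact (hasDerivAt_const (1:ℝ) (0:ℝ)).congr_of_eventuallyEq hev.symm
    · have h := ((Real.hasStrictDerivAt_const_rpow hpos (1:ℝ)).hasDerivAt).const_mul (P x)
      have e : P x * W x y * Real.log (W x y) = P x * (W x y ^ (1:ℝ) * Real.log (W x y)) := by
        rw [Real.rpow_one]
        ring
      rw [e]
      exact h
  -- S at 1
  have hA1 : ∀ y, Afun W P (1:ℝ) y = Q1 y := by
    intro y
    simp only [Afun, Real.rpow_one, hQ1]
  have hS1 : Sfun W P 1 = 1 := by
    rw [Sfun]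
    simp only [hA1, inv_one, Real.rpow_one]
    calc ∑ y, Q1 y = ∑ x, P x * ∑ y, W x y := by
          rw [Finset.sum_comm (f := fun y x => P x * W x y)]
          exact Finset.sum_congr rfl fun x _ => (Finset.mul_sum _ _ _).symm
      _ = 1 := by
          simp only [(fun x => (hW x).2 : ∀ x, ∑ y, W x y = 1), mul_one, hP.2]
  -- derivative of each F y
  have hF : ∀ y, HasDerivAt (fun γ => Afun W P γ y ^ γ⁻¹) (D y) 1 := by
    intro y
    by_cases hq : Q1 y = 0
    · have hzero : ∀ x, P x * W x y = 0 := by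
        intro x
        have := (Finset.sum_eq_zero_iff_of_nonneg
          (fun x _ => mul_nonneg (hP.1 x) ((hW x).1 y))).mp hq
        exact this x (Finset.mem_univ x)
      have hev : (fun _ : ℝ => (0:ℝ)) =ᶠ[nhds 1] (fun γ : ℝ => Afun W P γ y ^ γ⁻¹) := by
        refine Filter.eventually_of_mem (Ioi_mem_nhds one_pos) fun γ hγ => ?_
        have hA0 : Afun W P γ y = 0 := Finset.sum_eq_zero fun x _ => by
          rcases mul_eq_zero.mp (hzero x) with h | h
          · rw [h, zero_mul]
          · rw [h, Real.zero_rpow (ne_of_gt hγ), mul_zero]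
        show (0:ℝ) = Afun W P γ y ^ γ⁻¹
        rw [hA0, Real.zero_rpow (inv_ne_zero (ne_of_gt hγ))]
      have hDy : D y = 0 := by
        rw [hD]
        simp only [hq, zero_mul, sub_zero]
        refine Finset.sum_eq_zero fun x _ => ?_
        rw [hzero x, zero_mul]
      rw [hDy]
      exact (hasDerivAt_const (1:ℝ) (0:ℝ)).congr_of_eventuallyEq hev.symm
    · have hqpos : 0 < Q1 y := lt_of_le_of_ne (hQ1nonneg y) (Ne.symm hq)
      obtain ⟨x0, hx0⟩ : ∃ x, 0 < P x * W x y := by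
        by_contra h
        push_neg at h
        exact absurd (Finset.sum_nonpos fun x _ => h x) (not_le.mpr hqpos)
      have hP0 : 0 < P x0 ∧ 0 < W x0 y := by
        rcases mul_pos_iff.mp hx0 with h | h
        · exact h
        · exact absurd h.1 (not_lt.mpr (hP.1 x0))
      have hApos : ∀ γ : ℝ, 0 < Afun W P γ y := by
        intro γ
        have h1 : P x0 * W x0 y ^ γ ≤ Afun W P γ y :=
          Finset.single_le_sum (f := fun x => P x * W x y ^ γ)
            (fun x _ => mul_nonneg (hP.1 x) (Real.rpow_nonneg ((hW x).1 y) γ))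
            (Finset.mem_univ x0)
        exact lt_of_lt_of_le (mul_pos hP0.1 (Real.rpow_pos_of_pos hP0.2 γ)) h1
      have hinner : HasDerivAt (fun γ : ℝ => γ⁻¹ * Real.log (Afun W P γ y))
          ((-1) * Real.log (Q1 y) +
            1⁻¹ * ((∑ x, P x * W x y * Real.log (W x y)) / Q1 y)) 1 := by
        have h1 : HasDerivAt (fun γ : ℝ => γ⁻¹) (-1 : ℝ) 1 := by
          have := hasDerivAt_inv (one_ne_zero (α := ℝ))
          simpa using this
        have h2 : HasDerivAt (fun γ => Real.log (Afun W P γ y))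
            ((∑ x, P x * W x y * Real.log (W x y)) / Q1 y) 1 := by
          have := (hAderiv y).log (by rw [hA1 y]; exact hqpos.ne')
          rwa [hA1 y] at this
        have := h1.mul h2
        rw [hA1 y] at this
        exact this
      have hexp := hinner.exp
      have hrw : ∀ γ : ℝ, Afun W P γ y ^ γ⁻¹
          = Real.exp (γ⁻¹ * Real.log (Afun W P γ y)) := fun γ => by
        rw [Real.rpow_def_of_pos (hApos γ), mul_comm]
      simp only [hrw]
      convert hexp using 1
      rw [inv_one, one_mul, Real.exp_log (by rw [hA1 y]; exact hqpos), hA1 y, hD]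
      field_simp
      ring
  have hS : HasDerivAt (fun γ => Sfun W P γ) (∑ y, D y) 1 := by
    have := HasDerivAt.fun_sum (fun y (_ : y ∈ Finset.univ) => hF y)
    exact this
  have hu : HasDerivAt (fun γ => Real.log (Sfun W P γ)) (∑ y, D y) 1 := by
    have := hS.log (by rw [hS1]; exact one_ne_zero)
    rwa [hS1, div_one] at this
  -- identification of the limit
  have hM : renyiInfo 1 P W = ∑ y, D y := by
    rw [renyiInfo, if_pos rfl]
    have per : ∀ x y, P x * (W x y * Real.log (W x y / Q1 y))
        = P x * W x y * Real.log (W x y) - P x * W x y * Real.log (Q1 y) := by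
      intro x y
      by_cases hPx : P x = 0
      · simp [hPx]
      by_cases hWx : W x y = 0
      · simp [hWx]
      have hPxpos : 0 < P x := lt_of_le_of_ne (hP.1 x) (Ne.symm hPx)
      have hWpos : 0 < W x y := lt_of_le_of_ne ((hW x).1 y) (Ne.symm hWx)
      have hqpos : 0 < Q1 y := by
        have h1 : P x * W x y ≤ Q1 y :=
          Finset.single_le_sum (f := fun x => P x * W x y)
            (fun x _ => mul_nonneg (hP.1 x) ((hW x).1 y)) (Finset.mem_univ x)
        exact lt_of_lt_of_le (mul_pos hPxpos hWpos) h1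
      rw [Real.log_div hWx hqpos.ne']
      ring
    calc ∑ x, P x * ∑ y, W x y * Real.log (W x y / Q1 y)
        = ∑ x, ∑ y, P x * (W x y * Real.log (W x y / Q1 y)) := by
          exact Finset.sum_congr rfl fun x _ => Finset.mul_sum _ _ _
      _ = ∑ y, ∑ x, (P x * W x y * Real.log (W x y) - P x * W x y * Real.log (Q1 y)) := by
          rw [Finset.sum_comm]
          exact Finset.sum_congr rfl fun y _ => Finset.sum_congr rfl fun x _ => per x y
      _ = ∑ y, D y := by
          refine Finset.sum_congr rfl fun y _ => ?_
          rw [Finset.sum_sub_distrib, hD]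
          simp only
          congr 1
          rw [← Finset.sum_mul]
  -- slope convergence
  have hslope := hasDerivAt_iff_tendsto_slope.mp hu
  have hsub : nhdsWithin (1:ℝ) (Set.Iio 1) ≤ nhdsWithin 1 {(1:ℝ)}ᶜ :=
    nhdsWithin_mono 1 (fun x hx => ne_of_lt hx)
  have h1 : Filter.Tendsto
      (fun α : ℝ => α * slope (fun γ => Real.log (Sfun W P γ)) 1 α)
      (nhdsWithin 1 (Set.Iio 1)) (nhds (∑ y, D y)) := by
    have ha : Filter.Tendsto (fun α : ℝ => α) (nhdsWithin 1 (Set.Iio 1)) (nhds 1) :=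
      tendsto_id.mono_left nhdsWithin_le_nhds
    have := ha.mul (hslope.mono_left hsub)
    rwa [one_mul] at this
  rw [hM]
  refine h1.congr' ?_
  refine Filter.eventually_of_mem self_mem_nhdsWithin fun α (hα : α ∈ Set.Iio 1) => ?_
  have hne : α ≠ 1 := ne_of_lt hα
  show α * slope (fun γ => Real.log (Sfun W P γ)) 1 α = renyiInfo α P W
  rw [renyiInfo_eq hW hP hne, slope_def_field, hS1, Real.log_one, sub_zero,
    div_mul_eq_mul_div, mul_div_assoc]

end Aux5

/-- existence of the orders `φ` and `η` used in the sphere packing bound. -/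
theorem exists_orders_for_spe {X Y : Type*} [Fintype X] [Fintype Y] [Nonempty X]
    (W : X → Y → ℝ) (hW : ∀ x, IsPMF (W x)) (C0 : ℝ)
    (hC0 : Filter.Tendsto (fun α => renyiCap α W) (nhdsWithin 0 (Set.Ioi 0)) (nhds C0))
    (hne : C0 ≠ renyiCap 1 W) (R : ℝ) (hR : R ∈ Set.Ioo C0 (renyiCap 1 W)) :
    ∃ φ ∈ Set.Ioo (0:ℝ) 1, renyiCap φ W = R ∧
      ∃ η ∈ Set.Ioo φ 1, ((1 - η) / η) * renyiCap η W = spe R W := by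
  classical
  obtain ⟨hRC0, hRC1⟩ := hR
  set f : ℝ → ℝ := fun α => renyiCap α W with hfdef
  set L : ℝ := Real.log (Fintype.card Y) with hL
  -- Step 1 : find α0 ∈ (0,1) with R < f α0
  obtain ⟨P, hPpmf, hPval⟩ : ∃ P : X → ℝ, IsPMF P ∧ R < renyiInfo 1 P W := by
    obtain ⟨x0⟩ := (inferInstance : Nonempty X)
    have hne' : {c | ∃ P : X → ℝ, IsPMF P ∧ c = renyiInfo 1 P W}.Nonempty :=
      ⟨renyiInfo 1 (fun x => if x = x0 then (1:ℝ) else 0) W,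
        fun x => if x = x0 then (1:ℝ) else 0, isPMF_delta x0, rfl⟩
    obtain ⟨c, hc, hcR⟩ := exists_lt_of_lt_csSup hne' hRC1
    obtain ⟨P, hP, rfl⟩ := hc
    exact ⟨P, hP, hcR⟩
  have htend := info_tendsto_one hW hPpmf
  have hev : ∀ᶠ α in nhdsWithin 1 (Set.Iio 1), R < renyiInfo α P W :=
    htend.eventually (eventually_gt_nhds hPval)
  have hev2 : ∀ᶠ α in nhdsWithin (1:ℝ) (Set.Iio 1), 0 < α :=
    eventually_nhdsWithin_of_eventually_nhds (eventually_gt_nhds one_pos)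
  have hev3 : ∀ᶠ α in nhdsWithin (1:ℝ) (Set.Iio 1), α < 1 :=
    Filter.eventually_of_mem self_mem_nhdsWithin fun α hα => hα
  obtain ⟨α0, hα0R, hα00, hα01⟩ := (hev.and (hev2.and hev3)).exists
  have hfα0 : R < f α0 := lt_of_lt_of_le hα0R (info_le_cap hW hα00 hα01 hPpmf)
  -- Step 2 : find α1 ∈ (0, α0) with f α1 < R
  have hev4 : ∀ᶠ α in nhdsWithin (0:ℝ) (Set.Ioi 0), f α < R :=
    hC0.eventually (eventually_lt_nhds hRC0)
  have hev5 : ∀ᶠ α in nhdsWithin (0:ℝ) (Set.Ioi 0), α < α0 :=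
    eventually_nhdsWithin_of_eventually_nhds (eventually_lt_nhds hα00)
  have hev6 : ∀ᶠ α in nhdsWithin (0:ℝ) (Set.Ioi 0), 0 < α :=
    Filter.eventually_of_mem self_mem_nhdsWithin fun α hα => hα
  obtain ⟨α1, hα1R, hα1lt, hα10⟩ := (hev4.and (hev5.and hev6)).exists
  -- Step 3 : IVT for φ
  have hcont : ContinuousOn f (Set.Icc α1 α0) := fun x hx =>
    (cap_continuousAt hW ⟨lt_of_lt_of_le hα10 hx.1, lt_of_le_of_lt hx.2 hα01⟩).continuousWithinAt
  obtain ⟨φ, hφmem, hφval⟩ :=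
    intermediate_value_Icc (le_of_lt hα1lt) hcont ⟨hα1R.le, hfα0.le⟩
  have hφ0 : 0 < φ := lt_of_lt_of_le hα10 hφmem.1
  have hφ1 : φ < 1 := lt_of_le_of_lt hφmem.2 hα01
  refine ⟨φ, ⟨hφ0, hφ1⟩, hφval, ?_⟩
  -- Step 4 : basic positivity facts
  have hC0nonneg : 0 ≤ C0 := by
    have hevpos : ∀ᶠ α in nhdsWithin (0:ℝ) (Set.Ioi 0), 0 ≤ f α := by
      have h1 : ∀ᶠ α in nhdsWithin (0:ℝ) (Set.Ioi 0), α < 1 :=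
        eventually_nhdsWithin_of_eventually_nhds (eventually_lt_nhds one_pos)
      filter_upwards [h1, hev6] with α ha1 ha0
      exact cap_nonneg hW ha0 ha1
    exact ge_of_tendsto hC0 hevpos
  have hRpos : 0 < R := lt_of_le_of_lt hC0nonneg hRC0
  set gφ : ℝ := ((1 - φ) / φ) * R with hgφdef
  have hgφpos : 0 < gφ := mul_pos (div_pos (by linarith) hφ0) hRpos
  have hLR : R < L := lt_of_lt_of_le hfα0 (cap_le_log hW hα00 hα01)
  have hLRpos : 0 < L - R := by linarith
  -- Step 5 : choose m and bound the spe set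
  set c0 : ℝ := gφ / (2 * (L - R)) with hc0
  have hc0pos : 0 < c0 := by rw [hc0]; positivity
  set m : ℝ := max φ (1 / (1 + c0)) with hm
  have hm1 : m < 1 := by
    apply max_lt hφ1
    rw [div_lt_one (by linarith)]
    linarith
  have hmφ : φ ≤ m := le_max_left _ _
  have hm0 : 0 < m := lt_of_lt_of_le hφ0 hmφ
  have hmbound : ((1 - m) / m) * (L - R) ≤ gφ / 2 := by
    have h1 : 1 / (1 + c0) ≤ m := le_max_right _ _
    have h3 : (0:ℝ) < 1 + c0 := by linarith
    have h2 : 1 / m ≤ 1 + c0 := by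
      rw [div_le_iff₀ hm0]
      calc (1:ℝ) = (1 / (1 + c0)) * (1 + c0) := by field_simp
        _ ≤ m * (1 + c0) := mul_le_mul_of_nonneg_right h1 h3.le
        _ = (1 + c0) * m := mul_comm _ _
    have h4 : (1 - m) / m ≤ c0 := by
      rw [sub_div, div_self hm0.ne', one_div] at *
      linarith
    calc ((1 - m) / m) * (L - R) ≤ c0 * (L - R) :=
        mul_le_mul_of_nonneg_right h4 hLRpos.le
      _ = gφ / 2 := by rw [hc0]; field_simp
  have hmono_factor : ∀ a b : ℝ, 0 < a → a ≤ b → (1 - b) / b ≤ (1 - a) / a := by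
    intro a b ha hab
    have hb : 0 < b := lt_of_lt_of_le ha hab
    rw [sub_div, div_self hb.ne', sub_div, div_self ha.ne']
    have := one_div_le_one_div_of_le ha hab
    simp only [one_div] at this ⊢
    linarith
  set B : ℝ := max (gφ - ((1 - m) / m) * R) (((1 - m) / m) * (L - R)) with hB
  have hBnonneg2 : 0 ≤ ((1 - m) / m) * (L - R) :=
    mul_nonneg (div_nonneg (by linarith) hm0.le) hLRpos.le
  have hfact : ∀ α : ℝ, 0 < α → α < 1 → ((1 - α) / α) * (renyiCap α W - R) ≤ B := by
    intro α h0 h1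
    rcases le_or_gt α φ with hle | hgt
    · have hfR : renyiCap α W ≤ R := hφval ▸ cap_mono hW h0 hle hφ1
      have hv : ((1 - α) / α) * (renyiCap α W - R) ≤ 0 :=
        mul_nonpos_iff.mpr (Or.inl ⟨div_nonneg (by linarith) h0.le, by linarith⟩)
      exact le_trans hv (le_trans hBnonneg2 (le_max_right _ _))
    rcases le_or_gt α m with hlem | hgtm
    · have hganti : ((1 - α) / α) * renyiCap α W ≤ ((1 - φ) / φ) * renyiCap φ W :=
        capg_anti hW hφ0 hgt.le h1
      have hfactor : (1 - m) / m ≤ (1 - α) / α := hmono_factor α m h0 hlem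
      have h5 : ((1 - m) / m) * R ≤ ((1 - α) / α) * R :=
        mul_le_mul_of_nonneg_right hfactor hRpos.le
      have hgφeq : ((1 - φ) / φ) * renyiCap φ W = gφ := by
        rw [show renyiCap φ W = R from hφval]
      have expand : ((1 - α) / α) * (renyiCap α W - R)
          = ((1 - α) / α) * renyiCap α W - ((1 - α) / α) * R := by ring
      refine le_trans ?_ (le_max_left _ _)
      rw [expand]
      linarith
    · have hfL : renyiCap α W ≤ L := cap_le_log hW h0 h1
      have hfactor : (1 - α) / α ≤ (1 - m) / m := hmono_factor m α hm0 hgtm.le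
      rcases le_or_gt (renyiCap α W) R with hfa | hfa
      · have hv : ((1 - α) / α) * (renyiCap α W - R) ≤ 0 :=
          mul_nonpos_iff.mpr (Or.inl ⟨div_nonneg (by linarith) h0.le, by linarith⟩)
        exact le_trans hv (le_trans hBnonneg2 (le_max_right _ _))
      · have hv : ((1 - α) / α) * (renyiCap α W - R) ≤ ((1 - m) / m) * (L - R) :=
          mul_le_mul hfactor (by linarith) (by linarith)
            (div_nonneg (by linarith) hm0.le)
        exact le_trans hv (le_max_right _ _)
  set E : Set ℝ := {e | ∃ α ∈ Set.Ioo (0:ℝ) 1, e = ((1 - α) / α) * (renyiCap α W - R)}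
    with hE
  have hspe_eq : spe R W = sSup E := rfl
  have hEne : E.Nonempty := ⟨((1 - φ) / φ) * (renyiCap φ W - R), φ, ⟨hφ0, hφ1⟩, rfl⟩
  have hEbdd : BddAbove E := by
    refine ⟨B, ?_⟩
    rintro e ⟨α, ⟨h0, h1⟩, rfl⟩
    exact hfact α h0 h1
  have hspe_le : spe R W ≤ B := by
    rw [hspe_eq]
    refine csSup_le hEne ?_
    rintro e ⟨α, ⟨h0, h1⟩, rfl⟩
    exact hfact α h0 h1
  have hB_lt : B < gφ := by
    apply max_lt
    · have : 0 < ((1 - m) / m) * R := mul_pos (div_pos (by linarith) hm0) hRpos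
      linarith
    · linarith
  have hspe_pos : 0 < spe R W := by
    have hmem : ((1 - α0) / α0) * (renyiCap α0 W - R) ∈ E := ⟨α0, ⟨hα00, hα01⟩, rfl⟩
    have hvp : 0 < ((1 - α0) / α0) * (renyiCap α0 W - R) :=
      mul_pos (div_pos (by linarith) hα00) (by
        have := hfα0
        simp only [hfdef] at this
        linarith)
    rw [hspe_eq]
    exact lt_of_lt_of_le hvp (le_csSup hEbdd hmem)
  -- Step 6 : the function g and IVT for η
  set g : ℝ → ℝ := fun α => ((1 - α) / α) * renyiCap α W with hg
  have hgcont : ∀ x ∈ Set.Ioo (0:ℝ) 1, ContinuousAt g x := by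
    intro x hx
    apply ContinuousAt.mul
    · exact ContinuousAt.div (by fun_prop) (by fun_prop) hx.1.ne'
    · exact cap_continuousAt hW hx
  have hgto0 : Filter.Tendsto g (nhdsWithin 1 (Set.Iio 1)) (nhds 0) := by
    have h1 : ∀ᶠ α in nhdsWithin (1:ℝ) (Set.Iio 1), 0 < α :=
      eventually_nhdsWithin_of_eventually_nhds (eventually_gt_nhds one_pos)
    have hbound : ∀ᶠ α in nhdsWithin (1:ℝ) (Set.Iio 1),
        0 ≤ g α ∧ g α ≤ ((1 - α) / α) * L := by
      filter_upwards [h1, self_mem_nhdsWithin] with α h0 (h1' : α ∈ Set.Iio 1)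
      have hα1 : α < 1 := h1'
      constructor
      · exact mul_nonneg (div_nonneg (by linarith) h0.le) (cap_nonneg hW h0 hα1)
      · exact mul_le_mul_of_nonneg_left (cap_le_log hW h0 hα1)
          (div_nonneg (by linarith) h0.le)
    have hup : Filter.Tendsto (fun α : ℝ => ((1 - α) / α) * L)
        (nhdsWithin 1 (Set.Iio 1)) (nhds 0) := by
      have hca : ContinuousAt (fun α : ℝ => ((1 - α) / α) * L) 1 := by
        apply ContinuousAt.mul
        · apply ContinuousAt.div
          · fun_prop
          · fun_prop
          · exact one_ne_zero
        · exact continuousAt_const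
      have h2 := hca.tendsto.mono_left
        (nhdsWithin_le_nhds : nhdsWithin (1:ℝ) (Set.Iio 1) ≤ nhds 1)
      norm_num at h2
      exact h2
    exact tendsto_of_tendsto_of_tendsto_of_le_of_le' tendsto_const_nhds hup
      (hbound.mono fun α h => h.1) (hbound.mono fun α h => h.2)
  have hevg : ∀ᶠ α in nhdsWithin (1:ℝ) (Set.Iio 1), g α < spe R W :=
    hgto0.eventually (eventually_lt_nhds hspe_pos)
  have hevφ : ∀ᶠ α in nhdsWithin (1:ℝ) (Set.Iio 1), φ < α :=
    eventually_nhdsWithin_of_eventually_nhds (eventually_gt_nhds hφ1)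
  obtain ⟨m1, hm1g, hm1φ, hm11⟩ := (hevg.and (hevφ.and hev3)).exists
  have hgφval : g φ = gφ := by
    rw [hg]
    simp only
    rw [show renyiCap φ W = R from hφval]
  have hspe_lt : spe R W < g φ := by
    rw [hgφval]
    exact lt_of_le_of_lt hspe_le hB_lt
  have hcont2 : ContinuousOn g (Set.Icc φ m1) := fun x hx =>
    (hgcont x ⟨lt_of_lt_of_le hφ0 hx.1, lt_of_le_of_lt hx.2 hm11⟩).continuousWithinAt
  obtain ⟨η, hηmem, hηval⟩ :=
    intermediate_value_Icc' (le_of_lt hm1φ) hcont2 ⟨hm1g.le, hspe_lt.le⟩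
  have hηφ : φ < η := by
    rcases lt_or_eq_of_le hηmem.1 with h | h
    · exact h
    · exfalso
      rw [← h] at hηval
      rw [hηval] at hspe_lt
      exact lt_irrefl _ hspe_lt
  exact ⟨η, ⟨hηφ, lt_of_le_of_lt hηmem.2 hm11⟩, hηval⟩
end

section
/- Let W be a stochastic matrix from a finite set X to pmfs on a finite set Y with C_0(W) ≠ C_1(W). Then the sphere packing exponent E_sp(R,W) is strictly positive for every rate R ∈ (C_0(W), C_1(W)). -/
open Real MeasureTheory Filter

section Aux

variable {X Y : Type*} [Fintype X] [Fintype Y]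

private lemma sum_sum_pmf (W : X → Y → ℝ) (hW : ∀ x, IsPMF (W x)) (P : X → ℝ) (hP : IsPMF P) :
    ∑ y, ∑ x, P x * W x y = 1 := by
  rw [Finset.sum_comm]
  have h : ∀ x ∈ Finset.univ (α := X), ∑ y, P x * W x y = P x := by
    intro x _
    rw [← Finset.mul_sum, (hW x).2, mul_one]
  rw [Finset.sum_congr rfl h, hP.2]

private lemma renyiInfo_le_log_card [Nonempty Y]
    (W : X → Y → ℝ) (hW : ∀ x, IsPMF (W x)) (P : X → ℝ) (hP : IsPMF P)
    {α : ℝ} (hα : α ∈ Set.Ioo (0:ℝ) 1) :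
    renyiInfo α P W ≤ Real.log (Fintype.card Y) := by
  obtain ⟨hα0, hα1⟩ := hα
  have hαne : α ≠ 1 := ne_of_lt hα1
  set n : ℝ := (Fintype.card Y : ℝ) with hn
  have hnpos : 0 < n := by
    rw [hn]
    exact_mod_cast (Fintype.card_pos : 0 < Fintype.card Y)
  set S : Y → ℝ := fun y => ∑ x, P x * W x y ^ α with hS
  have hSnonneg : ∀ y, 0 ≤ S y := fun y => Finset.sum_nonneg fun x _ =>
    mul_nonneg (hP.1 x) (Real.rpow_nonneg ((hW x).1 y) α)
  have hQS : ∀ y, (∑ x, P x * W x y) ≤ S y := by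
    intro y
    refine Finset.sum_le_sum fun x _ => ?_
    rcases eq_or_lt_of_le ((hW x).1 y) with h | h
    · rw [← h, Real.zero_rpow (ne_of_gt hα0)]
    · have hle1 : W x y ≤ 1 := by
        have := Finset.single_le_sum (fun y _ => (hW x).1 y) (Finset.mem_univ y)
        rw [(hW x).2] at this; exact this
      have h2 := Real.rpow_le_rpow_of_exponent_ge h hle1 (le_of_lt hα1)
      rw [Real.rpow_one] at h2
      exact mul_le_mul_of_nonneg_left h2 (hP.1 x)
  have hsumS : (1:ℝ) ≤ ∑ y, S y := by
    calc (1:ℝ) = ∑ y, ∑ x, P x * W x y := (sum_sum_pmf W hW P hP).symm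
    _ ≤ ∑ y, S y := Finset.sum_le_sum (fun y _ => hQS y)
  have hp : (1:ℝ) ≤ α⁻¹ := by
    rw [le_inv_comm₀ one_pos hα0]
    · simpa using hα1.le
  have hwsum : ∑ _y : Y, (n⁻¹ : ℝ) = 1 := by
    rw [Finset.sum_const, nsmul_eq_mul]
    field_simp
    simp [hn]
  have hJ := Real.rpow_arith_mean_le_arith_mean_rpow Finset.univ (fun _ : Y => n⁻¹) S
      (fun _ _ => by positivity) hwsum (fun y _ => hSnonneg y) hp
  have hL : (n⁻¹ : ℝ) ^ α⁻¹ ≤ (∑ y, n⁻¹ * S y) ^ α⁻¹ := by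
    apply Real.rpow_le_rpow (by positivity) ?_ (by positivity)
    rw [← Finset.mul_sum]
    calc (n⁻¹:ℝ) = n⁻¹ * 1 := (mul_one _).symm
    _ ≤ n⁻¹ * ∑ y, S y := mul_le_mul_of_nonneg_left hsumS (by positivity)
  have key : n * n⁻¹ ^ α⁻¹ ≤ ∑ y, S y ^ α⁻¹ := by
    have h1 := hL.trans hJ
    rw [← Finset.mul_sum] at h1
    calc n * n⁻¹ ^ α⁻¹ ≤ n * (n⁻¹ * ∑ y, S y ^ α⁻¹) :=
          mul_le_mul_of_nonneg_left h1 hnpos.le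
    _ = ∑ y, S y ^ α⁻¹ := by field_simp
  have hpos : (0:ℝ) < n * n⁻¹ ^ α⁻¹ := by positivity
  have hlog : (1 - α⁻¹) * Real.log n ≤ Real.log (∑ y, S y ^ α⁻¹) := by
    have h1 : Real.log (n * n⁻¹ ^ α⁻¹) ≤ Real.log (∑ y, S y ^ α⁻¹) :=
      Real.log_le_log hpos key
    rw [Real.log_mul (ne_of_gt hnpos) (by positivity),
      Real.log_rpow (by positivity), Real.log_inv] at h1
    nlinarith [h1]
  have hc : α / (α - 1) < 0 := div_neg_of_pos_of_neg hα0 (by linarith)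
  rw [renyiInfo, if_neg hαne]
  calc α / (α - 1) * Real.log (∑ y, (∑ x, P x * W x y ^ α) ^ α⁻¹)
      ≤ α / (α - 1) * ((1 - α⁻¹) * Real.log n) := by
        refine mul_le_mul_of_nonpos_left ?_ hc.le
        exact hlog
  _ = Real.log n := by
        have hne1 : α - 1 ≠ 0 := by intro h; apply hαne; linarith
        have : α / (α - 1) * (1 - α⁻¹) = 1 := by
          field_simp
        rw [← mul_assoc, this, one_mul]

private lemma capSet_nonempty [Nonempty X] (α : ℝ) (W : X → Y → ℝ) :
    Set.Nonempty {c | ∃ P : X → ℝ, IsPMF P ∧ c = renyiInfo α P W} := by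
  refine ⟨renyiInfo α (fun _ => (Fintype.card X : ℝ)⁻¹) W,
    fun _ => (Fintype.card X : ℝ)⁻¹, ⟨fun _ => by positivity, ?_⟩, rfl⟩
  rw [Finset.sum_const, nsmul_eq_mul, Finset.card_univ]
  have : (0:ℝ) < Fintype.card X := by exact_mod_cast (Fintype.card_pos : 0 < Fintype.card X)
  field_simp

private lemma bddAbove_capSet [Nonempty Y] (W : X → Y → ℝ) (hW : ∀ x, IsPMF (W x))
    {α : ℝ} (hα : α ∈ Set.Ioo (0:ℝ) 1) :
    BddAbove {c | ∃ P : X → ℝ, IsPMF P ∧ c = renyiInfo α P W} := by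
  refine ⟨Real.log (Fintype.card Y), ?_⟩
  rintro c ⟨P, hP, rfl⟩
  exact renyiInfo_le_log_card W hW P hP hα

private lemma renyiCap_le_log_card [Nonempty X] [Nonempty Y] (W : X → Y → ℝ)
    (hW : ∀ x, IsPMF (W x)) {α : ℝ} (hα : α ∈ Set.Ioo (0:ℝ) 1) :
    renyiCap α W ≤ Real.log (Fintype.card Y) := by
  refine csSup_le (capSet_nonempty α W) ?_
  rintro c ⟨P, hP, rfl⟩
  exact renyiInfo_le_log_card W hW P hP hα

private lemma tendsto_renyiInfo_one (W : X → Y → ℝ) (hW : ∀ x, IsPMF (W x))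
    (P : X → ℝ) (hP : IsPMF P) :
    Filter.Tendsto (fun α => renyiInfo α P W) (nhdsWithin 1 (Set.Iio 1))
      (nhds (renyiInfo 1 P W)) := by
  classical
  set Q : Y → ℝ := fun y => ∑ x, P x * W x y with hQdef
  have hQnonneg : ∀ y, 0 ≤ Q y := fun y =>
    Finset.sum_nonneg fun x _ => mul_nonneg (hP.1 x) ((hW x).1 y)
  set S : Y → ℝ → ℝ := fun y α => ∑ x, P x * W x y ^ α with hSdef
  set d : Y → ℝ := fun y =>
    (∑ x, P x * (W x y * Real.log (W x y))) - Q y * Real.log (Q y) with hddef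
  have hS1 : ∀ y, S y 1 = Q y := by
    intro y; simp only [hSdef, hQdef, Real.rpow_one]
  have hSd : ∀ y, HasDerivAt (S y) (∑ x, P x * (W x y * Real.log (W x y))) 1 := by
    intro y
    apply HasDerivAt.fun_sum
    intro x _
    rcases eq_or_lt_of_le ((hW x).1 y) with h | h
    · have hev : (fun α : ℝ => (0:ℝ)) =ᶠ[nhds (1:ℝ)] fun α => P x * W x y ^ α := by
        filter_upwards [eventually_gt_nhds (zero_lt_one)] with α hα
        rw [← h, Real.zero_rpow (ne_of_gt hα), mul_zero]
      have h0 : HasDerivAt (fun _ : ℝ => (0:ℝ)) 0 1 := hasDerivAt_const 1 0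
      have h1 := h0.congr_of_eventuallyEq hev.symm
      have h2 : P x * (W x y * Real.log (W x y)) = 0 := by rw [← h]; simp
      rw [h2]; exact h1
    · have hfun : (fun α : ℝ => P x * W x y ^ α)
          = fun α => P x * Real.exp (Real.log (W x y) * α) := by
        funext α; rw [Real.rpow_def_of_pos h]
      rw [hfun]
      have h1 : HasDerivAt (fun α : ℝ => Real.log (W x y) * α) (Real.log (W x y)) 1 := by
        simpa using (hasDerivAt_id (1:ℝ)).const_mul (Real.log (W x y))
      have h2 := h1.exp
      have h3 := h2.const_mul (P x)
      convert h3 using 1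
      · rfl
      rw [mul_one, Real.exp_log h]
  have hgd : ∀ y, HasDerivAt (fun α => S y α ^ α⁻¹) (d y) 1 := by
    intro y
    rcases eq_or_lt_of_le (hQnonneg y) with h | h
    · have hterm : ∀ x, P x * W x y = 0 := by
        intro x
        have h2 := (Finset.sum_eq_zero_iff_of_nonneg
          (fun x _ => mul_nonneg (hP.1 x) ((hW x).1 y))).1 h.symm
        exact h2 x (Finset.mem_univ x)
      have hz : (fun _ : ℝ => (0:ℝ)) =ᶠ[nhds (1:ℝ)] fun α => S y α ^ α⁻¹ := by
        filter_upwards [eventually_gt_nhds zero_lt_one] with α hα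
        have hs0 : S y α = 0 := Finset.sum_eq_zero fun x _ => by
          rcases mul_eq_zero.1 (hterm x) with h' | h'
          · rw [h', zero_mul]
          · rw [h', Real.zero_rpow (ne_of_gt hα), mul_zero]
        rw [hs0, Real.zero_rpow (inv_ne_zero (ne_of_gt hα))]
      have hdy : d y = 0 := by
        have h1 : ∀ x ∈ Finset.univ (α := X), P x * (W x y * Real.log (W x y)) = 0 := by
          intro x _
          rcases mul_eq_zero.1 (hterm x) with h' | h' <;> simp [h']
        rw [hddef]
        simp only [Finset.sum_eq_zero h1, ← h]
        simp
      rw [hdy]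
      exact (hasDerivAt_const 1 (0:ℝ)).congr_of_eventuallyEq hz.symm
    · have hQne : Q y ≠ 0 := ne_of_gt h
      have hScont : ContinuousAt (S y) 1 := (hSd y).continuousAt
      have hSpos : ∀ᶠ α in nhds (1:ℝ), 0 < S y α := by
        have h1 : 0 < S y 1 := by rw [hS1 y]; exact h
        exact hScont.eventually (eventually_gt_nhds h1)
      have hlogS : HasDerivAt (fun α => Real.log (S y α))
          ((∑ x, P x * (W x y * Real.log (W x y))) / Q y) 1 := by
        have := (hSd y).log (by rw [hS1 y]; exact hQne)
        rwa [hS1 y] at this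
      have hinv : HasDerivAt (fun α : ℝ => α⁻¹) (-(1:ℝ)) 1 := by
        simpa using hasDerivAt_inv (one_ne_zero : (1:ℝ) ≠ 0)
      have hmul := hlogS.mul hinv
      have hexp := hmul.exp
      have heq : (fun α => Real.exp (Real.log (S y α) * α⁻¹))
          =ᶠ[nhds (1:ℝ)] fun α => S y α ^ α⁻¹ := by
        filter_upwards [hSpos] with α hα
        rw [Real.rpow_def_of_pos hα]
      have h2 := hexp.congr_of_eventuallyEq heq.symm
      convert h2 using 1
      · rfl
      · rfl
      simp only [hddef, Pi.mul_apply, inv_one, mul_one, hS1 y, Real.exp_log h]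
      field_simp
      ring
  have hGd : HasDerivAt (fun α => ∑ y, S y α ^ α⁻¹) (∑ y, d y) 1 :=
    HasDerivAt.fun_sum (fun y _ => hgd y)
  have hG1 : ∑ y, S y 1 ^ ((1:ℝ)⁻¹) = 1 := by
    simp only [inv_one, Real.rpow_one, hS1]
    exact sum_sum_pmf W hW P hP
  have hlogG : HasDerivAt (fun α => Real.log (∑ y, S y α ^ α⁻¹)) (∑ y, d y) 1 := by
    have h1 := hGd.log (by rw [hG1]; exact one_ne_zero)
    rwa [hG1, div_one] at h1
  have hslope := hasDerivAt_iff_tendsto_slope.1 hlogG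
  have hDI : ∑ y, d y = renyiInfo 1 P W := by
    rw [renyiInfo, if_pos rfl]
    simp_rw [Finset.mul_sum]
    rw [Finset.sum_comm]
    refine Finset.sum_congr rfl fun y _ => ?_
    have hQsum : Q y * Real.log (Q y) = ∑ x, P x * W x y * Real.log (Q y) := by
      rw [← Finset.sum_mul]
    rw [hddef]
    simp only []
    rw [hQsum, ← Finset.sum_sub_distrib]
    refine (Finset.sum_congr rfl fun x _ => ?_).symm
    rcases eq_or_ne (P x * W x y) 0 with hne | hne
    · rcases mul_eq_zero.1 hne with h' | h' <;> simp [h']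
    · have hPx : P x ≠ 0 := fun h' => hne (by rw [h', zero_mul])
      have hWx : W x y ≠ 0 := fun h' => hne (by rw [h', mul_zero])
      have hWpos : 0 < W x y := lt_of_le_of_ne ((hW x).1 y) (Ne.symm hWx)
      have hPpos : 0 < P x := lt_of_le_of_ne (hP.1 x) (Ne.symm hPx)
      have hQpos : 0 < Q y :=
        lt_of_lt_of_le (mul_pos hPpos hWpos)
          (Finset.single_le_sum (fun x _ => mul_nonneg (hP.1 x) ((hW x).1 y))
            (Finset.mem_univ x))
      rw [Real.log_div hWx (ne_of_gt hQpos)]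
      ring
  have hmono : nhdsWithin (1:ℝ) (Set.Iio 1) ≤ nhdsWithin 1 {(1:ℝ)}ᶜ :=
    nhdsWithin_mono 1 (fun a ha => ne_of_lt ha)
  have hid : Filter.Tendsto (fun α : ℝ => α) (nhdsWithin 1 (Set.Iio 1)) (nhds 1) :=
    tendsto_id.mono_left nhdsWithin_le_nhds
  have htend := hid.mul (hslope.mono_left hmono)
  rw [one_mul, hDI] at htend
  refine htend.congr' ?_ |>.mono_left le_rfl
  · filter_upwards [self_mem_nhdsWithin] with α (hα : α < 1)
    rw [renyiInfo, if_neg (ne_of_lt hα), slope_def_field]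
    have hlog1 : Real.log (∑ y, S y 1 ^ ((1:ℝ)⁻¹)) = 0 := by rw [hG1, Real.log_one]
    rw [hlog1]
    simp only [hSdef]
    field_simp
    ring

end Aux

/-- the sphere packing exponent is strictly positive on `(C_0(W), C_1(W))`. -/
theorem spe_pos {X Y : Type*} [Fintype X] [Fintype Y] [Nonempty X]
    (W : X → Y → ℝ) (hW : ∀ x, IsPMF (W x)) (C0 : ℝ)
    (hC0 : Filter.Tendsto (fun α => renyiCap α W) (nhdsWithin 0 (Set.Ioi 0)) (nhds C0))
    (hne : C0 ≠ renyiCap 1 W) (R : ℝ) (hR : R ∈ Set.Ioo C0 (renyiCap 1 W)) :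
    0 < spe R W := by
  classical
  obtain ⟨hRC0, hRC1⟩ := hR
  have hYne : Nonempty Y := by
    by_contra h
    have h2 := (hW (Classical.arbitrary X)).2
    rw [not_nonempty_iff] at h
    rw [Finset.univ_eq_empty, Finset.sum_empty] at h2
    exact zero_ne_one h2
  obtain ⟨c, hc, hcR⟩ := exists_lt_of_lt_csSup (capSet_nonempty 1 W) hRC1
  obtain ⟨P, hP, rfl⟩ := hc
  have ht := tendsto_renyiInfo_one W hW P hP
  have hev1 : ∀ᶠ α in nhdsWithin (1:ℝ) (Set.Iio 1), R < renyiInfo α P W :=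
    ht.eventually (eventually_gt_nhds hcR)
  have hev2 : ∀ᶠ α in nhdsWithin (1:ℝ) (Set.Iio 1), α ∈ Set.Ioo (0:ℝ) 1 := by
    filter_upwards [self_mem_nhdsWithin,
      eventually_nhdsWithin_of_eventually_nhds (eventually_gt_nhds (zero_lt_one))]
      with α h1 h2
    exact ⟨h2, h1⟩
  obtain ⟨α, hαR, hα⟩ := (hev1.and hev2).exists
  have hcap : R < renyiCap α W :=
    lt_of_lt_of_le hαR (le_csSup (bddAbove_capSet W hW hα) ⟨P, hP, rfl⟩)
  have he0pos : 0 < ((1 - α) / α) * (renyiCap α W - R) :=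
    mul_pos (div_pos (by linarith [hα.2]) hα.1) (by linarith)
  have hevC0 : ∀ᶠ β in nhdsWithin (0:ℝ) (Set.Ioi 0), renyiCap β W < R :=
    hC0.eventually (eventually_lt_nhds hRC0)
  obtain ⟨δ, hδ0, hδ⟩ := mem_nhdsGT_iff_exists_Ioo_subset.1 hevC0
  have hδpos : (0:ℝ) < δ := hδ0
  have hbdd : BddAbove {e | ∃ β ∈ Set.Ioo (0:ℝ) 1,
      e = ((1 - β) / β) * (renyiCap β W - R)} := by
    refine ⟨max 0 (δ⁻¹ * (Real.log (Fintype.card Y) - R)), ?_⟩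
    rintro e ⟨β, ⟨hβ0, hβ1⟩, rfl⟩
    have hcoef : 0 < (1 - β) / β := div_pos (by linarith) hβ0
    rcases lt_or_ge β δ with hlt | hge
    · have hneg : renyiCap β W - R < 0 := by
        have h3 : renyiCap β W < R := hδ ⟨hβ0, hlt⟩
        linarith
      refine le_trans (le_of_lt ?_) (le_max_left _ _)
      exact mul_neg_of_pos_of_neg hcoef hneg
    · have hub : renyiCap β W ≤ Real.log (Fintype.card Y) :=
        renyiCap_le_log_card W hW ⟨hβ0, hβ1⟩
      rcases le_or_gt (renyiCap β W - R) 0 with hle | hpos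
      · refine le_trans ?_ (le_max_left _ _)
        exact mul_nonpos_of_nonneg_of_nonpos hcoef.le hle
      · refine le_trans ?_ (le_max_right _ _)
        have hc2 : (1 - β) / β ≤ δ⁻¹ := by
          rw [div_le_iff₀ hβ0]
          have hδi : 0 < δ⁻¹ := inv_pos.2 hδpos
          have h1 : δ⁻¹ * δ ≤ δ⁻¹ * β := mul_le_mul_of_nonneg_left hge hδi.le
          rw [inv_mul_cancel₀ (ne_of_gt hδpos)] at h1
          linarith
        have hc3 : renyiCap β W - R ≤ Real.log (Fintype.card Y) - R := by linarith
        exact mul_le_mul hc2 hc3 hpos.le (by positivity)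
  exact lt_of_lt_of_le he0pos (le_csSup hbdd ⟨α, hα, rfl⟩)
end
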